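/- arXiv:2411.16315 — 2 statements merged into one kernel-verified Lean document; each statement's English description precedes it below -/
import Mathlib

section
/- Let M be a MAG over V = {X, Y} ∪ O satisfying the pretreatment setup. If there exist a set Z ⊆ MB(Y) \ {X} and a vertex S ∈ MB(X) \ {Y} such that at least one of the following holds: (i) X and Y are m-separated by Z, or (ii) S and X are m-connected given Z and S and Y are m-separated by Z, then X is not an ancestor of Y in M (equivalently, M does not contain the directed edge X → Y), i.e., X has no causal effect on Y. (Theorem 3: soundness of rule R2.) -/
namespace CausalGraph

/-- A directed mixed graph: directed edges `dir a b` (a → b) and bidirected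
edges `bidir a b` (a ↔ b), with at most one edge between any two vertices
and no self-loops. -/
structure MixedGraph (V : Type*) where
  dir : V → V → Prop
  bidir : V → V → Prop
  bidir_symm : ∀ a b, bidir a b → bidir b a
  dir_irrefl : ∀ a, ¬ dir a a
  bidir_irrefl : ∀ a, ¬ bidir a a
  dir_not_dir : ∀ a b, dir a b → ¬ dir b a
  dir_not_bidir : ∀ a b, dir a b → ¬ bidir a b

variable {V : Type*}

/-- Two vertices are adjacent if there is an edge (of any kind) between them. -/
def MixedGraph.adj (G : MixedGraph V) (a b : V) : Prop :=
  G.dir a b ∨ G.dir b a ∨ G.bidir a b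

/-- There is an edge between `a` and `b` with an arrowhead at `b`. -/
def ArrowInto (G : MixedGraph V) (a b : V) : Prop :=
  G.dir a b ∨ G.bidir a b

/-- `p` is a path between `a` and `b`: a list of distinct vertices, each
consecutive pair adjacent, starting at `a` and ending at `b`. -/
def IsPathBetween (G : MixedGraph V) (p : List V) (a b : V) : Prop :=
  List.Chain' G.adj p ∧ p.Nodup ∧ p.head? = some a ∧ p.getLast? = some b ∧ 2 ≤ p.length

/-- `p` is a directed path from `a` to `b`: all edges are directed edges
pointing toward `b`. -/
def IsDirectedPath (G : MixedGraph V) (p : List V) (a b : V) : Prop :=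
  List.Chain' G.dir p ∧ p.Nodup ∧ p.head? = some a ∧ p.getLast? = some b ∧ 2 ≤ p.length

/-- `a` is an ancestor of `b` (and `b` a descendant of `a`): `a = b` or there
is a directed path from `a` to `b`. -/
def Ancestor (G : MixedGraph V) (a b : V) : Prop :=
  a = b ∨ ∃ p, IsDirectedPath G p a b

/-- `w` is an intermediate (non-endpoint) vertex of the path `p`. -/
def IsIntermediateOn (p : List V) (w : V) : Prop :=
  ∃ (u v : V) (l₁ l₂ : List V), p = l₁ ++ u :: w :: v :: l₂

/-- `w` is a collider on the path `p`: both edges of the path at `w` have an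
arrowhead at `w`. -/
def IsColliderOn (G : MixedGraph V) (p : List V) (w : V) : Prop :=
  ∃ (u v : V) (l₁ l₂ : List V), p = l₁ ++ u :: w :: v :: l₂ ∧
    ArrowInto G u w ∧ ArrowInto G v w

/-- `w` is a non-collider intermediate vertex on the path `p`. -/
def IsNonColliderOn (G : MixedGraph V) (p : List V) (w : V) : Prop :=
  IsIntermediateOn p w ∧ ¬ IsColliderOn G p w

/-- The path `p` between `a` and `b` (with `a, b ∉ Z`) is m-connecting given
`Z`: every non-collider on it is not in `Z`, and every collider on it has a
descendant in `Z`. -/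
def MConnPath (G : MixedGraph V) (Z : Set V) (p : List V) (a b : V) : Prop :=
  IsPathBetween G p a b ∧ a ∉ Z ∧ b ∉ Z ∧
    (∀ w, IsNonColliderOn G p w → w ∉ Z) ∧
    (∀ w, IsColliderOn G p w → ∃ d ∈ Z, Ancestor G w d)

/-- `a` and `b` are m-separated by `Z`: no path between them is m-connecting
given `Z`. -/
def MSep (G : MixedGraph V) (Z : Set V) (a b : V) : Prop :=
  ∀ p, ¬ MConnPath G Z p a b

/-- `a` and `b` are m-connected given `Z`. -/
def MConn (G : MixedGraph V) (Z : Set V) (a b : V) : Prop :=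
  ∃ p, MConnPath G Z p a b

/-- Set version of m-separation: every vertex of `A` is m-separated from every
vertex of `B` by `Z`. -/
def MSepSets (G : MixedGraph V) (Z A B : Set V) : Prop :=
  ∀ a ∈ A, ∀ b ∈ B, MSep G Z a b

/-- `G` is a maximal ancestral graph (MAG): it is ancestral (no directed or
almost directed cycles), and every pair of distinct non-adjacent vertices is
m-separated by some set of vertices. -/
def IsMAG (G : MixedGraph V) : Prop :=
  (∀ a b, G.dir a b → ¬ Ancestor G b a) ∧
  (∀ a b, G.bidir a b → ¬ Ancestor G a b) ∧
  (∀ a b, a ≠ b → ¬ G.adj a b → ∃ Z : Set V, a ∉ Z ∧ b ∉ Z ∧ MSep G Z a b)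

/-- `p` is a collider path between `a` and `b`: every intermediate vertex is a
collider on it. -/
def IsColliderPathBetween (G : MixedGraph V) (p : List V) (a b : V) : Prop :=
  IsPathBetween G p a b ∧ ∀ w, IsIntermediateOn p w → IsColliderOn G p w

/-- The Markov blanket of `y`: all vertices adjacent to `y`, together with all
vertices non-adjacent to `y` joined to `y` by a collider path. -/
def MarkovBlanket (G : MixedGraph V) (y : V) : Set V :=
  {v | v ≠ y ∧ (G.adj v y ∨ (¬ G.adj v y ∧ ∃ p, IsColliderPathBetween G p v y))}

/-- The directed edge `x → y` is visible: there is a vertex `s` not adjacent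
to `y` such that either there is an edge between `s` and `x` with an arrowhead
at `x`, or there is a collider path from `s` to `x` with an arrowhead at `x`
all of whose intermediate vertices are parents of `y`. -/
def VisibleEdge (G : MixedGraph V) (x y : V) : Prop :=
  G.dir x y ∧ ∃ s, s ≠ y ∧ ¬ G.adj s y ∧
    (ArrowInto G s x ∨
      ∃ p, IsColliderPathBetween G p s x ∧
        (∃ (l : List V) (u : V), p = l ++ [u, x] ∧ ArrowInto G u x) ∧
        (∀ w, IsIntermediateOn p w → G.dir w y))

/-- A non-causal path from `x` to `y`: a path between `x` and `y` that is not
a directed path from `x` to `y`. -/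
def NonCausalPath (G : MixedGraph V) (p : List V) (a b : V) : Prop :=
  IsPathBetween G p a b ∧ ¬ IsDirectedPath G p a b

/-- `Z` blocks every non-causal path from `x` to `y`. -/
def BlocksAllNonCausal (G : MixedGraph V) (x y : V) (Z : Set V) : Prop :=
  ∀ p, NonCausalPath G p x y → ¬ MConnPath G Z p x y

/-- `Z` satisfies the generalized adjustment criterion relative to `(x, y)`:
every directed path from `x` to `y` starts with a visible directed edge out of
`x`, `Z` contains no descendant of any vertex lying on a directed path from
`x` to `y`, and `Z` blocks every non-causal path from `x` to `y`. -/
def ValidAdjustment (G : MixedGraph V) (x y : V) (Z : Set V) : Prop :=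
  (∀ (p : List V) (w : V) (l : List V),
      IsDirectedPath G p x y → p = x :: w :: l → VisibleEdge G x w) ∧
  (∀ v ∈ Z, ¬ ∃ (w : V) (p : List V), IsDirectedPath G p x y ∧ w ∈ p ∧ Ancestor G w v) ∧
  BlocksAllNonCausal G x y Z

/-- Pretreatment setup: `G` is a MAG over `V = {x, y} ∪ O`, `x ≠ y`, `y` is
not an ancestor of `x`, and neither `x` nor `y` is an ancestor of any vertex
of `O`. -/
structure Pretreatment (G : MixedGraph V) (x y : V) (O : Set V) : Prop where
  mag : IsMAG G
  ne : x ≠ y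
  x_not_mem : x ∉ O
  y_not_mem : y ∉ O
  cover : (Set.univ : Set V) = {x, y} ∪ O
  y_not_anc_x : ¬ Ancestor G y x
  x_not_anc_O : ∀ v ∈ O, ¬ Ancestor G x v
  y_not_anc_O : ∀ v ∈ O, ¬ Ancestor G y v


section Helpers

variable {α : Type*} {V : Type*}

lemma concat_inj'' {l l' : List α} {a a' : α} (h : l ++ [a] = l' ++ [a']) : l = l' ∧ a = a' := by
  have h2 := congrArg List.reverse h
  simp only [List.reverse_append, List.reverse_singleton, List.singleton_append] at h2
  obtain ⟨rfl, h3⟩ := List.cons.inj h2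
  exact ⟨List.reverse_injective h3, rfl⟩

lemma mem_of_getLast?' {l : List α} {a : α} (h : l.getLast? = some a) : a ∈ l := by
  obtain ⟨h', h''⟩ := List.mem_getLast?_eq_getLast h
  exact h'' ▸ List.getLast_mem h'

lemma split_unique {w : α} : ∀ {s s' t t' : List α}, w ∉ s → w ∉ s' →
    s ++ w :: t = s' ++ w :: t' → s = s' ∧ t = t' := by
  intro s
  induction s with
  | nil =>
    intro s' t t' _ hw' h
    cases s' with
    | nil => simpa using h
    | cons h' tl' =>
      simp only [List.nil_append, List.cons_append, List.cons.injEq] at h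
      exact absurd (h.1 ▸ List.mem_cons_self) (h.1 ▸ hw')
  | cons hd tl ih =>
    intro s' t t' hw hw' h
    cases s' with
    | nil =>
      simp only [List.nil_append, List.cons_append, List.cons.injEq] at h
      exact absurd (h.1 ▸ List.mem_cons_self) (h.1 ▸ hw)
    | cons hd' tl' =>
      simp only [List.cons_append, List.cons.injEq] at h
      obtain ⟨rfl, h2⟩ := h
      obtain ⟨rfl, rfl⟩ := ih (fun hm => hw (List.mem_cons_of_mem _ hm))
        (fun hm => hw' (List.mem_cons_of_mem _ hm)) h2
      exact ⟨rfl, rfl⟩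

lemma decomp_unique {p : List α} (hp : p.Nodup) {w u v a b : α} {l₁ l₂ m₁ m₂ : List α}
    (h1 : p = l₁ ++ u :: w :: v :: l₂) (h2 : p = m₁ ++ a :: w :: b :: m₂) :
    l₁ = m₁ ∧ u = a ∧ v = b ∧ l₂ = m₂ := by
  have e : (l₁ ++ [u]) ++ w :: (v :: l₂) = (m₁ ++ [a]) ++ w :: (b :: m₂) := by
    simpa using h1.symm.trans h2
  have hn1 : ((l₁ ++ [u]) ++ w :: (v :: l₂)).Nodup := by
    have := h1 ▸ hp; simpa using this
  have hn2 : ((m₁ ++ [a]) ++ w :: (b :: m₂)).Nodup := by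
    have := h2 ▸ hp; simpa using this
  have hw1 : w ∉ l₁ ++ [u] := fun hm =>
    (List.nodup_append'.mp hn1).2.2 hm (List.mem_cons_self)
  have hw2 : w ∉ m₁ ++ [a] := fun hm =>
    (List.nodup_append'.mp hn2).2.2 hm (List.mem_cons_self)
  obtain ⟨hL, hR⟩ := split_unique hw1 hw2 e
  obtain ⟨rfl, rfl⟩ := concat_inj'' hL
  obtain ⟨rfl, rfl⟩ := List.cons.inj hR
  exact ⟨rfl, rfl, rfl, rfl⟩


lemma concat_decomp {p : List α} {y u w v : α} {l₁ l₂ : List α}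
    (h : p ++ [y] = l₁ ++ u :: w :: v :: l₂) :
    (l₂ = [] ∧ v = y ∧ p = l₁ ++ [u, w]) ∨
      ∃ l₂', l₂ = l₂' ++ [y] ∧ p = l₁ ++ u :: w :: v :: l₂' := by
  rcases List.eq_nil_or_concat l₂ with rfl | ⟨l₂', z, rfl⟩
  · left
    have h' : p ++ [y] = (l₁ ++ [u, w]) ++ [v] := by simpa using h
    obtain ⟨hp, hv⟩ := concat_inj'' h'
    exact ⟨rfl, hv.symm, hp⟩
  · right
    have h' : p ++ [y] = (l₁ ++ u :: w :: v :: l₂') ++ [z] := by simpa using h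
    obtain ⟨hp, hz⟩ := concat_inj'' h'
    exact ⟨l₂', by simp [hz], hp⟩

lemma intermediate_length {p : List α} {w : α} (h : IsIntermediateOn p w) : 3 ≤ p.length := by
  obtain ⟨u, v, l₁, l₂, rfl⟩ := h
  simp only [List.length_append, List.length_cons]
  omega

lemma collider_intermediate {G : MixedGraph V} {p : List V} {w : V}
    (h : IsColliderOn G p w) : IsIntermediateOn p w := by
  obtain ⟨u, v, l₁, l₂, hp, _, _⟩ := h
  exact ⟨u, v, l₁, l₂, hp⟩

lemma anc_of_dir (G : MixedGraph V) {a b : V} (h : G.dir a b) : Ancestor G a b := by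
  have hne : a ≠ b := fun he => G.dir_irrefl a (he ▸ h)
  exact Or.inr ⟨[a, b], by simp [List.Chain', List.isChain_cons_cons, h], by simp [hne], rfl, rfl, by simp⟩

lemma dir_of_anc {G : MixedGraph V} {x y : V} {O : Set V}
    (h : Pretreatment G x y O) (ha : Ancestor G x y) : G.dir x y := by
  rcases ha with rfl | ⟨p, hchain, hnodup, hhead, hlast, hlen⟩
  · exact absurd rfl h.ne
  · match p, hhead with
    | a :: q, hhead =>
    have hax : x = a := (by simpa using hhead : a = x).symm
    subst hax
    match q, hlen with
    | w :: l, _ =>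
    have hxw : G.dir x w := (List.isChain_cons_cons.mp hchain).1
    match l with
    | [] =>
      have : w = y := by simpa using hlast
      exact this ▸ hxw
    | z :: l' =>
      exfalso
      have hyl : y ∈ z :: l' := by
        rw [List.getLast?_cons_cons, List.getLast?_cons_cons] at hlast
        exact mem_of_getLast?' hlast
      have hwz : w ∉ z :: l' := by
        have := (List.nodup_cons.mp hnodup).2
        exact (List.nodup_cons.mp this).1
      have hwy : w ≠ y := fun he => hwz (he ▸ hyl)
      have hwx : w ≠ x := by
        intro he; exact (List.nodup_cons.mp hnodup).1 (he ▸ List.mem_cons_self)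
      have hwO : w ∈ O := by
        have : w ∈ (Set.univ : Set V) := Set.mem_univ w
        rw [h.cover] at this
        rcases this with h' | h'
        · rcases h' with h' | h' <;> simp_all
        · exact h'
      exact h.x_not_anc_O w hwO (anc_of_dir G hxw)

lemma extend_path {G : MixedGraph V} {Z : Set V} {p : List V} {S x y : V}
    (hp : MConnPath G Z p S x) (hxy : G.dir x y) (hy : y ∉ p) (hyZ : y ∉ Z) :
    MConnPath G Z (p ++ [y]) S y := by
  obtain ⟨⟨hchain, hnodup, hhead, hlast, hlen⟩, hSZ, hxZ, hnc, hc⟩ := hp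
  have hpne : p ≠ [] := by rintro rfl; simp at hhead
  refine ⟨⟨?_, ?_, ?_, List.getLast?_concat, ?_⟩, hSZ, hyZ, ?_, ?_⟩
  · show List.IsChain _ _
    rw [List.isChain_append]
    refine ⟨hchain, List.isChain_singleton y, ?_⟩
    intro a ha b hb
    have ha' : a = x := by rw [hlast] at ha; exact (Option.mem_some_iff.mp ha).symm
    have hb' : b = y := (by simpa using hb : y = b).symm
    rw [ha', hb']
    exact Or.inl hxy
  · simp [List.nodup_append, hnodup, hy]
    exact fun a ha he => hy (he ▸ ha)
  · cases p with
    | nil => simp at hhead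
    | cons a t => simpa using hhead
  · simp only [List.length_append, List.length_singleton]; omega
  · -- non-colliders
    rintro w ⟨hint, hncol⟩ hwZ
    obtain ⟨u, v, l₁, l₂, hdec⟩ := hint
    rcases concat_decomp hdec with ⟨rfl, rfl, hpeq⟩ | ⟨l₂', rfl, hpeq⟩
    · -- w = x, x ∉ Z
      have hwx : w = x := by
        have := hlast
        rw [hpeq] at this
        have h2 : (l₁ ++ [u, w]).getLast? = some w := by
          have : l₁ ++ [u, w] = (l₁ ++ [u]) ++ [w] := by simp
          rw [this]; exact List.getLast?_concat
        rw [h2] at this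
        exact Option.some_injective _ this
      exact hxZ (hwx ▸ hwZ)
    · -- w intermediate on p; must be collider on p, lift to collider on p++[y]
      by_cases hcp : IsColliderOn G p w
      · obtain ⟨a, b, m₁, m₂, hdec2, hau, hbv⟩ := hcp
        exact hncol ⟨a, b, m₁, m₂ ++ [y], by rw [hdec2]; simp, hau, hbv⟩
      · exact hnc w ⟨⟨u, v, l₁, l₂', hpeq⟩, hcp⟩ hwZ
  · -- colliders
    rintro w ⟨u, v, l₁, l₂, hdec, hau, hav⟩
    rcases concat_decomp hdec with ⟨rfl, hvy, hpeq⟩ | ⟨l₂', rfl, hpeq⟩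
    · -- w = x and ArrowInto y x : contradiction
      exfalso
      rw [hvy] at hav
      have hwx : w = x := by
        have := hlast
        rw [hpeq] at this
        have h2 : (l₁ ++ [u, w]).getLast? = some w := by
          have : l₁ ++ [u, w] = (l₁ ++ [u]) ++ [w] := by simp
          rw [this]; exact List.getLast?_concat
        rw [h2] at this
        exact Option.some_injective _ this
      rw [hwx] at hav
      rcases hav with h' | h'
      · exact G.dir_not_dir x y hxy h'
      · exact G.dir_not_bidir x y hxy (G.bidir_symm _ _ h')
    · exact hc w ⟨u, v, l₁, l₂', hpeq, hau, hav⟩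

lemma truncate_path {G : MixedGraph V} {Z : Set V} {q r : List V} {S x y : V}
    (hp : MConnPath G Z (q ++ y :: r) S x) (hyS : y ≠ S) (hyZ : y ∉ Z) :
    MConnPath G Z (q ++ [y]) S y := by
  obtain ⟨⟨hchain, hnodup, hhead, hlast, hlen⟩, hSZ, hxZ, hnc, hc⟩ := hp
  have hqne : q ≠ [] := by
    rintro rfl
    simp only [List.nil_append, List.head?_cons] at hhead
    exact hyS (Option.some_injective _ hhead)
  have hsplit : q ++ y :: r = (q ++ [y]) ++ r := by simp
  refine ⟨⟨?_, ?_, ?_, List.getLast?_concat, ?_⟩, hSZ, hyZ, ?_, ?_⟩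
  · change List.IsChain _ _ at hchain
    rw [hsplit, List.isChain_append] at hchain
    exact hchain.1
  · rw [hsplit, List.nodup_append] at hnodup
    exact hnodup.1
  · cases q with
    | nil => exact absurd rfl hqne
    | cons a t =>
      simp only [List.cons_append, List.head?_cons] at hhead ⊢
      exact hhead
  · cases q with
    | nil => exact absurd rfl hqne
    | cons a t => simp only [List.cons_append, List.length_cons, List.length_append,
        List.length_singleton]; omega
  · -- non-colliders on q ++ [y]
    rintro w ⟨hint, hncol⟩ hwZ
    obtain ⟨u, v, l₁, l₂, hdec⟩ := hint
    have hdecp : q ++ y :: r = l₁ ++ u :: w :: v :: (l₂ ++ r) := by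
      rw [hsplit, hdec]; simp
    by_cases hcp : IsColliderOn G (q ++ y :: r) w
    · obtain ⟨a, b, m₁, m₂, hdec2, hau, hbv⟩ := hcp
      obtain ⟨rfl, rfl, rfl, rfl⟩ := decomp_unique hnodup hdecp hdec2
      exact hncol ⟨u, v, l₁, l₂, hdec, hau, hbv⟩
    · exact hnc w ⟨⟨u, v, l₁, l₂ ++ r, hdecp⟩, hcp⟩ hwZ
  · -- colliders on q ++ [y]
    rintro w ⟨u, v, l₁, l₂, hdec, hau, hav⟩
    refine hc w ⟨u, v, l₁, l₂ ++ r, ?_, hau, hav⟩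
    rw [hsplit, hdec]; simp

end Helpers

/-- Theorem 3 (soundness of rule R2): if (i) `x` and `y` are m-separated by
`Z`, or (ii) `S` and `x` are m-connected given `Z` while `S` and `y` are
m-separated by `Z`, then `x` is not an ancestor of `y` (equivalently, the
directed edge `x → y` is absent). -/
theorem rule_R2_sound
    {V : Type*} [Fintype V] (G : MixedGraph V) (x y : V) (O : Set V)
    (h : Pretreatment G x y O) (S : V) (Z : Set V)
    (hS : S ∈ MarkovBlanket G x \ {y})
    (hZ : Z ⊆ MarkovBlanket G y \ {x})
    (hcond : MSep G Z x y ∨ (MConn G Z S x ∧ MSep G Z S y)) :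
    ¬ Ancestor G x y ∧ ¬ G.dir x y := by
  have hxZ : x ∉ Z := fun hx => (hZ hx).2 rfl
  have hyZ : y ∉ Z := fun hy => (hZ hy).1.1 rfl
  have hSy : y ≠ S := fun he => hS.2 (by simp [he])
  have hnd : ¬ G.dir x y := by
    intro hd
    rcases hcond with hsep | ⟨⟨p, hconn⟩, hsepSy⟩
    · apply hsep [x, y]
      refine ⟨⟨?_, by simp [h.ne], rfl, rfl, by simp⟩, hxZ, hyZ, ?_, ?_⟩
      · simp [List.Chain', List.isChain_cons_cons, MixedGraph.adj, hd]
      · rintro w ⟨hint, _⟩ _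
        have := intermediate_length hint
        simp at this
      · rintro w hcol
        have := intermediate_length (collider_intermediate hcol)
        simp at this
    · by_cases hy : y ∈ p
      · obtain ⟨q, r, rfl⟩ := List.append_of_mem hy
        exact hsepSy (q ++ [y]) (truncate_path hconn hSy hyZ)
      · exact hsepSy (p ++ [y]) (extend_path hconn hd hy hyZ)
  exact ⟨fun ha => hnd (dir_of_anc h ha), hnd⟩

end CausalGraph
end

section
/- Let M be a MAG over a finite vertex set V, let Y ∈ V, and let X ∈ MB(Y). Then X and Y are m-separated by some subset of V \ {X, Y} if and only if X and Y are m-separated by some subset of MB(Y) \ {X}. (Lemma 1, quoted from Xie et al. 2024.) -/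
namespace CausalGraph

variable {V : Type*}

section Aux

open List

variable {G : MixedGraph V} {Z : Set V}

/-! ### Basic edge lemmas -/

lemma aux_dir_ne {u v : V} (h : G.dir u v) : u ≠ v :=
  fun he => G.dir_irrefl v (he ▸ h)

lemma aux_adj_symm {u v : V} (h : G.adj u v) : G.adj v u := by
  rcases h with h | h | h
  · exact Or.inr (Or.inl h)
  · exact Or.inl h
  · exact Or.inr (Or.inr (G.bidir_symm _ _ h))

/-- An edge with no arrowhead at `v` is directed out of `v`. -/
lemma aux_tail {u v : V} (hadj : G.adj u v) (h : ¬ ArrowInto G u v) : G.dir v u := by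
  rcases hadj with h1 | h1 | h1
  · exact absurd (Or.inl h1) h
  · exact h1
  · exact absurd (Or.inr h1) h

lemma aux_dir_arrow {u v : V} (h : G.dir u v) : ArrowInto G u v := Or.inl h

lemma aux_dir_not_arrow_rev {u v : V} (h : G.dir u v) : ¬ ArrowInto G v u := by
  rintro (h2 | h2)
  · exact G.dir_not_dir _ _ h h2
  · exact G.dir_not_bidir _ _ h (G.bidir_symm _ _ h2)

lemma aux_adj_of_dir {u v : V} (h : G.dir u v) : G.adj u v := Or.inl h

lemma aux_getLast?_append' {l₁ l₂ : List V} (h : l₂ ≠ []) :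
    (l₁ ++ l₂).getLast? = l₂.getLast? := by
  rw [List.getLast?_append]
  rcases l₂ with _ | ⟨z, t⟩
  · exact absurd rfl h
  · simp [List.getLast?_cons]

lemma aux_getLast?_cons_cons (a b : V) (l : List V) :
    (a :: b :: l).getLast? = (b :: l).getLast? := by
  simp [List.getLast?_cons]


lemma aux_head?_cases {p : List V} {a : V} (h : p.head? = some a) : ∃ t, p = a :: t := by
  rcases p with _ | ⟨z, t⟩
  · simp at h
  · simp at h; exact ⟨t, by rw [h]⟩

/-! ### Ancestor lemmas -/

lemma aux_anc_refl (G : MixedGraph V) (a : V) : Ancestor G a a := Or.inl rfl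

lemma aux_anc_of_chain : ∀ (l : List V) (w d : V), List.Chain' G.dir (w :: l) →
    (w :: l).getLast? = some d → Ancestor G w d := by
  intro l
  induction l with
  | nil => intro w d _ hl; simp at hl; exact hl ▸ Or.inl rfl
  | cons u t ih =>
    intro w d hc hl
    rw [List.Chain', List.isChain_cons_cons] at hc
    have hud : Ancestor G u d := ih u d hc.2 (by rwa [aux_getLast?_cons_cons] at hl)
    have hdir : G.dir w u := hc.1
    clear hc hl ih
    rcases hud with rfl | ⟨p, hp⟩
    · exact Or.inr ⟨[w, u], by simp [List.Chain', hdir], by simp [aux_dir_ne hdir], rfl, rfl, by simp⟩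
    · by_cases hw : w ∈ p
      · obtain ⟨l₁, l₂, rfl⟩ := List.append_of_mem hw
        have hc2 : List.Chain' G.dir (w :: l₂) := ((List.isChain_append).mp hp.1).2.1
        have hl2 : (w :: l₂).getLast? = some d := by
          have h2 := hp.2.2.2.1
          rwa [aux_getLast?_append' (by simp)] at h2
        rcases l₂ with _ | ⟨z, l₂⟩
        · simp at hl2; exact hl2 ▸ Or.inl rfl
        · exact Or.inr ⟨w :: z :: l₂, hc2, (List.nodup_append.mp hp.2.1).2.1, rfl,
            hl2, by simp⟩
      · refine Or.inr ⟨w :: p, ?_, ?_, rfl, ?_, ?_⟩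
        · rw [List.Chain', List.isChain_cons]
          refine ⟨?_, hp.1⟩
          intro z hz
          rw [hp.2.2.1] at hz
          simp at hz
          exact hz ▸ hdir
        · exact List.nodup_cons.mpr ⟨hw, hp.2.1⟩
        · rcases p with _ | ⟨z, p⟩
          · exact absurd hp.2.2.2.2 (by simp)
          · rw [aux_getLast?_cons_cons]; exact hp.2.2.2.1
        · have := hp.2.2.2.2; simp; omega

lemma aux_anc_step {w u d : V} (h : G.dir w u) (h2 : Ancestor G u d) : Ancestor G w d := by
  rcases h2 with heq | ⟨p, hp⟩
  · exact heq ▸ aux_anc_of_chain [u] w u (by simp [List.Chain', h]) (by simp)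
  · obtain ⟨p', rfl⟩ := aux_head?_cases hp.2.2.1
    refine aux_anc_of_chain (u :: p') w d ?_ ?_
    · rw [List.Chain', List.isChain_cons_cons]; exact ⟨h, hp.1⟩
    · rw [aux_getLast?_cons_cons]; exact hp.2.2.2.1

lemma aux_anc_trans {a b c : V} (h1 : Ancestor G a b) (h2 : Ancestor G b c) : Ancestor G a c := by
  rcases h1 with heq | ⟨p, hp⟩
  · exact heq ▸ h2
  · obtain ⟨p', rfl⟩ := aux_head?_cases hp.2.2.1
    have hc : List.Chain' G.dir (a :: p') := hp.1
    have hl : (a :: p').getLast? = some b := hp.2.2.2.1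
    clear hp
    -- induction on p' generalizing a
    induction p' generalizing a with
    | nil => simp at hl; exact hl ▸ h2
    | cons u t ih =>
      rw [List.Chain', List.isChain_cons_cons] at hc
      exact aux_anc_step hc.1 (ih hc.2 (by rwa [aux_getLast?_cons_cons] at hl))

end Aux
section Aux2

open List

variable {G : MixedGraph V} {Z : Set V}

/-! ### Positional walk definitions -/

/-- Positional adjacency chain. -/
def PAdj (G : MixedGraph V) (W : List V) : Prop :=
  ∀ i (u v : V), W[i]? = some u → W[i+1]? = some v → G.adj u v

/-- Positional walk from `a` to `b`. -/
def PWalk (G : MixedGraph V) (W : List V) (a b : V) : Prop :=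
  PAdj G W ∧ W[0]? = some a ∧ W[W.length - 1]? = some b ∧ 2 ≤ W.length

/-- Both edges of a triple have an arrowhead at the middle. -/
def Heads (G : MixedGraph V) (u w v : V) : Prop :=
  ArrowInto G u w ∧ ArrowInto G v w

/-- Positional m-connecting conditions. -/
def POK (G : MixedGraph V) (Z : Set V) (W : List V) : Prop :=
  ∀ i (u w v : V), W[i]? = some u → W[i+1]? = some w → W[i+2]? = some v →
    (Heads G u w v → ∃ d ∈ Z, Ancestor G w d) ∧ (¬ Heads G u w v → w ∉ Z)

/-- Positional m-connecting walk. -/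
def PMCW (G : MixedGraph V) (Z : Set V) (W : List V) (a b : V) : Prop :=
  PWalk G W a b ∧ a ∉ Z ∧ b ∉ Z ∧ POK G Z W

/-! ### Bridges between list predicates and positions -/

lemma aux_chain'_pos {R : V → V → Prop} {W : List V} :
    List.Chain' R W ↔ ∀ i (u v : V), W[i]? = some u → W[i+1]? = some v → R u v := by
  rw [List.Chain', List.isChain_iff_getElem]
  constructor
  · intro h i u v hu hv
    obtain ⟨hv', rfl⟩ := List.getElem?_eq_some_iff.mp hv
    obtain ⟨hu', rfl⟩ := List.getElem?_eq_some_iff.mp hu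
    have := h i (by omega)
    simpa using this
  · intro h i hi
    exact h i _ _ (by simp [List.getElem?_eq_some_iff])
      (by simp [List.getElem?_eq_some_iff])

lemma aux_head?_pos {W : List V} {a : V} : W.head? = some a ↔ W[0]? = some a := by
  rw [List.head?_eq_getElem? (l := W)]

lemma aux_getLast?_pos {W : List V} {b : V} : W.getLast? = some b ↔ W[W.length - 1]? = some b := by
  rw [List.getLast?_eq_getElem? (l := W)]

lemma aux_pwalk_iff {W : List V} {a b : V} :
    (List.Chain' G.adj W ∧ W.head? = some a ∧ W.getLast? = some b ∧ 2 ≤ W.length)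
      ↔ PWalk G W a b := by
  rw [aux_chain'_pos, aux_head?_pos, aux_getLast?_pos]
  exact Iff.rfl

/-- From three consecutive positions, build a decomposition. -/
lemma aux_decomp_of_pos {W : List V} {i : ℕ} {u w v : V}
    (hu : W[i]? = some u) (hw : W[i+1]? = some w) (hv : W[i+2]? = some v) :
    ∃ l₁ l₂, W = l₁ ++ u :: w :: v :: l₂ := by
  obtain ⟨hv', rfl⟩ := List.getElem?_eq_some_iff.mp hv
  obtain ⟨hw', rfl⟩ := List.getElem?_eq_some_iff.mp hw
  obtain ⟨hu', rfl⟩ := List.getElem?_eq_some_iff.mp hu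
  refine ⟨W.take i, W.drop (i+3), ?_⟩
  conv_lhs => rw [← List.take_append_drop i W]
  congr 1
  rw [List.drop_eq_getElem_cons (by omega)]
  congr 1
  rw [List.drop_eq_getElem_cons (by omega)]
  congr 1
  rw [List.drop_eq_getElem_cons (by omega)]

/-- From a decomposition, get positions. -/
lemma aux_pos_of_decomp {W l₁ l₂ : List V} {u w v : V}
    (h : W = l₁ ++ u :: w :: v :: l₂) :
    W[l₁.length]? = some u ∧ W[l₁.length + 1]? = some w ∧ W[l₁.length + 2]? = some v := by
  subst h
  refine ⟨?_, ?_, ?_⟩ <;>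
  · rw [List.getElem?_append_right (by omega)]
    simp

lemma aux_pos_unique {W : List V} (hN : W.Nodup) {i j : ℕ} {w : V}
    (hi : W[i]? = some w) (hj : W[j]? = some w) : i = j := by
  obtain ⟨hi', _⟩ := List.getElem?_eq_some_iff.mp hi
  exact (List.getElem?_inj hi' hN).mp (hi.trans hj.symm)

lemma aux_len2 {W : List V} {a b : V} (ha : W[0]? = some a) (hb : W[W.length - 1]? = some b)
    (hab : a ≠ b) : 2 ≤ W.length := by
  rcases W with _ | ⟨z, _ | ⟨z', t⟩⟩
  · simp at ha
  · simp at ha hb; exact absurd (by rw [← ha, ← hb]) hab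
  · simp

end Aux2
section Aux3

open List

variable {G : MixedGraph V} {Z : Set V}

/-- Conversion: an m-connecting path is a positional m-connecting walk. -/
lemma aux_conv1 {p : List V} {a b : V} (h : MConnPath G Z p a b) : PMCW G Z p a b := by
  obtain ⟨⟨hc, hN, hh, hl, hlen⟩, ha, hb, hnc, hcol⟩ := h
  refine ⟨aux_pwalk_iff.mp ⟨hc, hh, hl, hlen⟩, ha, hb, ?_⟩
  intro i u w v hu hw hv
  constructor
  · intro hH
    refine hcol w ?_
    obtain ⟨l₁, l₂, hdec⟩ := aux_decomp_of_pos hu hw hv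
    exact ⟨u, v, l₁, l₂, hdec, hH.1, hH.2⟩
  · intro hH
    refine hnc w ⟨?_, ?_⟩
    · obtain ⟨l₁, l₂, hdec⟩ := aux_decomp_of_pos hu hw hv
      exact ⟨u, v, l₁, l₂, hdec⟩
    · rintro ⟨u', v', l₁, l₂, hdec, h1, h2⟩
      obtain ⟨hu', hw', hv'⟩ := aux_pos_of_decomp hdec
      have : l₁.length + 1 = i + 1 := aux_pos_unique hN hw' hw
      have hi : l₁.length = i := by omega
      rw [hi] at hu' hv'
      rw [hu'] at hu; rw [hv'] at hv
      exact hH ⟨(Option.some_injective _ hu) ▸ h1, (Option.some_injective _ hv) ▸ h2⟩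

/-- Conversion: a positional m-connecting walk with no duplicates is an
m-connecting path. -/
lemma aux_conv2 {W : List V} {a b : V} (h : PMCW G Z W a b) (hN : W.Nodup) :
    MConnPath G Z W a b := by
  obtain ⟨hw, ha, hb, hok⟩ := h
  obtain ⟨hc, hh, hl, hlen⟩ := aux_pwalk_iff.mpr hw
  refine ⟨⟨hc, hN, hh, hl, hlen⟩, ha, hb, ?_, ?_⟩
  · rintro w ⟨⟨u, v, l₁, l₂, hdec⟩, hncol⟩
    obtain ⟨hu, hw', hv⟩ := aux_pos_of_decomp hdec
    refine (hok _ _ _ _ hu hw' hv).2 ?_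
    intro hH
    exact hncol ⟨u, v, l₁, l₂, hdec, hH.1, hH.2⟩
  · rintro w ⟨u, v, l₁, l₂, hdec, h1, h2⟩
    obtain ⟨hu, hw', hv⟩ := aux_pos_of_decomp hdec
    exact (hok _ _ _ _ hu hw' hv).1 ⟨h1, h2⟩

/-- Positional collider walk: every intermediate vertex is a collider. -/
def PColWalk (G : MixedGraph V) (W : List V) (a b : V) : Prop :=
  PWalk G W a b ∧ ∀ i (u w v : V), W[i]? = some u → W[i+1]? = some w → W[i+2]? = some v →
    Heads G u w v

/-- Conversion: a nodup positional collider walk is a collider path. -/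
lemma aux_conv3 {W : List V} {a b : V} (h : PColWalk G W a b) (hN : W.Nodup) :
    IsColliderPathBetween G W a b := by
  obtain ⟨hw, hok⟩ := h
  obtain ⟨hc, hh, hl, hlen⟩ := aux_pwalk_iff.mpr hw
  refine ⟨⟨hc, hN, hh, hl, hlen⟩, ?_⟩
  rintro w ⟨u, v, l₁, l₂, hdec⟩
  obtain ⟨hu, hw', hv⟩ := aux_pos_of_decomp hdec
  have hH := hok _ _ _ _ hu hw' hv
  exact ⟨u, v, l₁, l₂, hdec, hH.1, hH.2⟩

end Aux3
section Aux4

open List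

variable {G : MixedGraph V} {Z : Set V}

/-- The splice of a walk: keep positions `0..i` and `j+1..`. -/
def Splice (W : List V) (i j : ℕ) : List V :=
  W.take (i+1) ++ W.drop (j+1)

lemma aux_splice_len {W : List V} {i j : ℕ} (hij : i < j) (hj : j < W.length) :
    (Splice W i j).length = W.length - (j - i) := by
  simp [Splice]
  omega

lemma aux_splice_get_le {W : List V} {i j m : ℕ} (hij : i < j) (hj : j < W.length)
    (hm : m ≤ i) : (Splice W i j)[m]? = W[m]? := by
  unfold Splice
  rw [List.getElem?_append, if_pos (by simp; omega), List.getElem?_take, if_pos (by omega)]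

lemma aux_splice_get_gt {W : List V} {i j m : ℕ} (hij : i < j) (hj : j < W.length)
    (hm : i < m) : (Splice W i j)[m]? = W[m + (j - i)]? := by
  unfold Splice
  rw [List.getElem?_append, if_neg (by simp; omega), List.getElem?_drop]
  congr 1
  simp
  omega

/-- Extraction of a duplicate pair of positions from a non-nodup list. -/
lemma aux_dup_pos {W : List V} (h : ¬ W.Nodup) :
    ∃ (i j : ℕ) (v : V), i < j ∧ j < W.length ∧ W[i]? = some v ∧ W[j]? = some v := by
  induction W with
  | nil => simp at h
  | cons c t ih =>
    by_cases hc : c ∈ t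
    · obtain ⟨⟨k, hk⟩, hget⟩ := List.get_of_mem hc
      exact ⟨0, k+1, c, by omega, by simpa using hk, by simp, by simpa using (List.getElem?_eq_some_iff.mpr ⟨hk, hget⟩)⟩
    · have ht : ¬ t.Nodup := fun hn => h (List.nodup_cons.mpr ⟨hc, hn⟩)
      obtain ⟨i, j, v, h1, h2, h3, h4⟩ := ih ht
      exact ⟨i+1, j+1, v, by omega, by simpa using h2, by simpa using h3, by simpa using h4⟩

/-- Mem of splice. -/
lemma aux_splice_subset {W : List V} {i j : ℕ} {u : V} (h : u ∈ Splice W i j) : u ∈ W := by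
  unfold Splice at h
  rcases List.mem_append.mp h with h | h
  · exact List.mem_of_mem_take h
  · exact List.mem_of_mem_drop h

end Aux4
section Aux5

open List

variable {G : MixedGraph V} {Z : Set V}

lemma aux_drop_get (W : List V) (k i : ℕ) : (W.drop k)[i]? = W[k+i]? := by
  rw [List.getElem?_drop]

lemma aux_take_get_some {W : List V} {t i : ℕ} {u : V} (h : (W.take t)[i]? = some u) :
    i < t ∧ W[i]? = some u := by
  rw [List.getElem?_take] at h
  by_cases hi : i < t
  · rw [if_pos hi] at h; exact ⟨hi, h⟩
  · rw [if_neg hi] at h; simp at h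

lemma aux_take_get {W : List V} {t i : ℕ} (hi : i < t) : (W.take t)[i]? = W[i]? := by
  rw [List.getElem?_take, if_pos hi]

lemma aux_get_lt {W : List V} {i : ℕ} {u : V} (h : W[i]? = some u) : i < W.length := by
  exact (List.getElem?_eq_some_iff.mp h).1

lemma aux_get_total {W : List V} {i : ℕ} (h : i < W.length) : ∃ u, W[i]? = some u :=
  ⟨W[i], List.getElem?_eq_some_iff.mpr ⟨h, rfl⟩⟩

lemma aux_pwalk_take {W : List V} {a b c : V} {k : ℕ} (h : PWalk G W a b)
    (hk : 1 ≤ k) (hkc : W[k]? = some c) : PWalk G (W.take (k+1)) a c := by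
  obtain ⟨hadj, ha, hb, hlen⟩ := h
  have hkn : k < W.length := aux_get_lt hkc
  have hl : (W.take (k+1)).length = k+1 := by simp; omega
  refine ⟨?_, ?_, ?_, ?_⟩
  · intro m u v hu hv
    exact hadj m u v (aux_take_get_some hu).2 (aux_take_get_some hv).2
  · rw [aux_take_get (by omega)]; exact ha
  · rw [hl]; simpa [aux_take_get (show k < k + 1 by omega)] using hkc
  · omega

lemma aux_pwalk_drop {W : List V} {a b c : V} {k : ℕ} (h : PWalk G W a b)
    (hk : k + 2 ≤ W.length) (hkc : W[k]? = some c) : PWalk G (W.drop k) c b := by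
  obtain ⟨hadj, ha, hb, hlen⟩ := h
  have hl : (W.drop k).length = W.length - k := by simp
  refine ⟨?_, ?_, ?_, ?_⟩
  · intro m u v hu hv
    rw [aux_drop_get] at hu hv
    exact hadj (k+m) u v hu (by rw [← Nat.add_assoc] at hv; exact hv)
  · rw [aux_drop_get]; simpa using hkc
  · rw [aux_drop_get, hl]
    have h2 : k + (W.length - k - 1) = W.length - 1 := by omega
    rw [h2]; exact hb
  · omega

lemma aux_splice_pwalk {W : List V} {a b : V} {i j : ℕ} (h : PWalk G W a b)
    (hij : i < j) (hjn : j + 1 < W.length) (hdup : W[i]? = W[j]?) :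
    PWalk G (Splice W i j) a b := by
  obtain ⟨hadj, ha, hb, hlen⟩ := h
  have hjn' : j < W.length := by omega
  have hL : (Splice W i j).length = W.length - (j - i) := aux_splice_len hij hjn'
  refine ⟨?_, ?_, ?_, ?_⟩
  · intro m u v hu hv
    rcases Nat.lt_or_ge m i with hm | hm
    · rw [aux_splice_get_le hij hjn' (by omega)] at hu
      rw [aux_splice_get_le hij hjn' (by omega)] at hv
      exact hadj m u v hu hv
    rcases Nat.eq_or_lt_of_le hm with hm' | hm'
    · -- i = m : junction edge
      rw [aux_splice_get_le hij hjn' (by omega)] at hu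
      rw [aux_splice_get_gt hij hjn' (by omega)] at hv
      have hvj : m + 1 + (j - i) = j + 1 := by omega
      rw [hvj] at hv
      have hmu : W[j]? = some u := by rw [← hdup, hm']; exact hu
      exact hadj j u v hmu hv
    · rw [aux_splice_get_gt hij hjn' (by omega)] at hu
      rw [aux_splice_get_gt hij hjn' (by omega)] at hv
      have h2 : m + 1 + (j - i) = (m + (j-i)) + 1 := by omega
      rw [h2] at hv
      exact hadj _ u v hu hv
  · rw [aux_splice_get_le hij hjn' (by omega)]; exact ha
  · rw [hL]
    rw [aux_splice_get_gt hij hjn' (by omega)]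
    have h2 : W.length - (j - i) - 1 + (j - i) = W.length - 1 := by omega
    rw [h2]; exact hb
  · omega

/-- Triples of a spliced walk: either an original triple, or the junction. -/
lemma aux_splice_cases {W : List V} {i j m : ℕ} {u w v : V}
    (hij : i < j) (hjn : j + 1 < W.length) (hdup : W[i]? = W[j]?)
    (hu : (Splice W i j)[m]? = some u) (hw : (Splice W i j)[m+1]? = some w)
    (hv : (Splice W i j)[m+2]? = some v) :
    (∃ m', W[m']? = some u ∧ W[m'+1]? = some w ∧ W[m'+2]? = some v) ∨
      (m + 1 = i ∧ W[i-1]? = some u ∧ W[i]? = some w ∧ W[j]? = some w ∧ W[j+1]? = some v) := by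
  have hjn' : j < W.length := by omega
  rcases Nat.lt_or_ge (m+2) (i+1) with hm | hm
  · left
    exact ⟨m, by rw [← aux_splice_get_le hij hjn' (by omega)]; exact hu,
      by rw [← aux_splice_get_le hij hjn' (by omega)]; exact hw,
      by rw [← aux_splice_get_le hij hjn' (by omega)]; exact hv⟩
  rcases Nat.lt_or_ge m i with hm' | hm'
  · rcases Nat.eq_or_lt_of_le (show m + 1 ≤ i by omega) with h1 | h1
    · right
      rw [aux_splice_get_le hij hjn' (by omega)] at hu
      rw [aux_splice_get_le hij hjn' (by omega)] at hw
      rw [aux_splice_get_gt hij hjn' (by omega)] at hv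
      have hvj : m + 2 + (j - i) = j + 1 := by omega
      rw [hvj] at hv
      refine ⟨h1, ?_, ?_, ?_, hv⟩
      · have hi1 : i - 1 = m := by omega
        rw [hi1]; exact hu
      · rw [← h1]; exact hw
      · rw [← hdup, ← h1]; exact hw
    · omega
  · left
    refine ⟨m + (j - i), ?_, ?_, ?_⟩
    · rcases Nat.eq_or_lt_of_le hm' with h1 | h1
      · rw [aux_splice_get_le hij hjn' (by omega)] at hu
        have h2 : m + (j - i) = j := by omega
        rw [h2, ← hdup, h1]; exact hu
      · rw [aux_splice_get_gt hij hjn' (by omega)] at hu; exact hu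
    · rw [aux_splice_get_gt hij hjn' (by omega)] at hw
      have h2 : m + 1 + (j - i) = m + (j - i) + 1 := by omega
      rw [h2] at hw; exact hw
    · rw [aux_splice_get_gt hij hjn' (by omega)] at hv
      have h2 : m + 2 + (j - i) = m + (j - i) + 2 := by omega
      rw [h2] at hv; exact hv

/-- Any collider walk can be trimmed to a nodup collider walk. -/
lemma aux_colwalk_nodup : ∀ n (W : List V) {a b : V}, W.length = n → a ≠ b →
    PColWalk G W a b → ∃ W', PColWalk G W' a b ∧ W'.Nodup ∧ ∀ u ∈ W', u ∈ W := by
  intro n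
  induction n using Nat.strong_induction_on with
  | _ n ih =>
    intro W a b hn hab h
    by_cases hN : W.Nodup
    · exact ⟨W, h, hN, fun u hu => hu⟩
    obtain ⟨i, j, v, hij, hjn, hiv, hjv⟩ := aux_dup_pos hN
    obtain ⟨hwk, hcol⟩ := h
    by_cases hjlast : j = W.length - 1
    · -- v = b : take prefix up to i
      have hvb : v = b := by
        rw [hjlast] at hjv
        exact Option.some_injective _ (hjv.symm.trans hwk.2.2.1)
      subst hvb
      have hi1 : 1 ≤ i := by
        rcases Nat.eq_zero_or_pos i with h0 | h1
        · rw [h0] at hiv; exact absurd (Option.some_injective _ (hwk.2.1.symm.trans hiv)) hab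
        · exact h1
      obtain ⟨W', hW1, hW2, hW3⟩ := ih (i+1) (by omega) (W.take (i+1)) (by simp; omega) hab
        ⟨aux_pwalk_take hwk hi1 hiv, fun m u w vv hu hw hvv =>
          hcol m u w vv (aux_take_get_some hu).2 (aux_take_get_some hw).2 (aux_take_get_some hvv).2⟩
      exact ⟨W', hW1, hW2, fun u hu => List.mem_of_mem_take (hW3 u hu)⟩
    · have hjn2 : j + 1 < W.length := by
        have := aux_get_lt hjv; omega
      by_cases hi0 : i = 0
      · -- v = a : drop to j
        subst hi0
        have hva : v = a := Option.some_injective _ (hiv.symm.trans hwk.2.1)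
        subst hva
        have hcolD : ∀ (m : ℕ) (u w vv : V), (W.drop j)[m]? = some u →
            (W.drop j)[m+1]? = some w → (W.drop j)[m+2]? = some vv → Heads G u w vv := by
          intro m u w vv hu hw hvv
          rw [aux_drop_get] at hu hw hvv
          refine hcol (j+m) u w vv hu ?_ ?_
          · rw [← Nat.add_assoc] at hw; exact hw
          · rw [← Nat.add_assoc] at hvv; exact hvv
        obtain ⟨W', hW1, hW2, hW3⟩ := ih (W.length - j) (by omega) (W.drop j) (by simp) hab
          ⟨aux_pwalk_drop hwk (by omega) hjv, hcolD⟩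
        exact ⟨W', hW1, hW2, fun u hu => List.mem_of_mem_drop (hW3 u hu)⟩
      · -- middle splice
        have hdup : W[i]? = W[j]? := hiv.trans hjv.symm
        have hcolS : ∀ (m : ℕ) (u w vv : V), (Splice W i j)[m]? = some u →
            (Splice W i j)[m+1]? = some w → (Splice W i j)[m+2]? = some vv → Heads G u w vv := by
          intro m u w vv hu hw hvv
          rcases aux_splice_cases hij hjn2 hdup hu hw hvv with ⟨mm, h1, h2, h3⟩ | ⟨hmi, h1, h2, h3, h4⟩
          · exact hcol mm u w vv h1 h2 h3
          · have hii1 : 1 ≤ i := by omega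
            have hA : ArrowInto G u w := by
              obtain ⟨u2, hu2⟩ := aux_get_total (show (i-1) + 2 < W.length by omega)
              have hiw : W[(i-1)+1]? = some w := by
                have h5 : i - 1 + 1 = i := by omega
                rw [h5]; exact h2
              exact (hcol (i-1) u w u2 h1 hiw hu2).1
            have hB : ArrowInto G vv w := by
              obtain ⟨u1, hu1⟩ := aux_get_total (show j - 1 < W.length by omega)
              have hjj : (j-1) + 1 = j := by omega
              have hjj2 : (j-1) + 2 = j + 1 := by omega
              refine (hcol (j-1) u1 w vv hu1 (by rw [hjj]; exact h3) (by rw [hjj2]; exact h4)).2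
            exact ⟨hA, hB⟩
        obtain ⟨W', hW1, hW2, hW3⟩ := ih (W.length - (j - i)) (by omega) (Splice W i j)
          (aux_splice_len hij (by omega)) hab ⟨aux_splice_pwalk hwk hij hjn2 hdup, hcolS⟩
        exact ⟨W', hW1, hW2, fun u hu => aux_splice_subset (hW3 u hu)⟩

end Aux5
section Aux6

open List

variable {G : MixedGraph V} {Z : Set V}

/-- Positional trek structure with apex position `jv`: edges left of `jv`
point leftwards, edges from `jv` on point rightwards. -/
def PTrek (G : MixedGraph V) (W : List V) (jv : ℕ) : Prop :=
  (∀ k (u v : V), k < jv → W[k]? = some u → W[k+1]? = some v → G.dir v u) ∧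
  (∀ k (u v : V), jv ≤ k → W[k]? = some u → W[k+1]? = some v → G.dir u v)

/-- Edge correspondence for splices. -/
lemma aux_splice_edge {W : List V} {i j m : ℕ} {u v : V}
    (hij : i < j) (hjn : j + 1 < W.length) (hdup : W[i]? = W[j]?)
    (hu : (Splice W i j)[m]? = some u) (hv : (Splice W i j)[m+1]? = some v) :
    ∃ m', ((m' = m ∧ m < i) ∨ (m' = j ∧ m = i) ∨ (m' = m + (j-i) ∧ i < m)) ∧
      W[m']? = some u ∧ W[m'+1]? = some v := by
  have hjn' : j < W.length := by omega
  rcases Nat.lt_or_ge m i with hm | hm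
  · refine ⟨m, Or.inl ⟨rfl, hm⟩, ?_, ?_⟩
    · rw [← aux_splice_get_le hij hjn' (by omega)]; exact hu
    · rw [← aux_splice_get_le hij hjn' (by omega)]; exact hv
  rcases Nat.eq_or_lt_of_le hm with h1 | h1
  · refine ⟨j, Or.inr (Or.inl ⟨rfl, h1.symm⟩), ?_, ?_⟩
    · rw [aux_splice_get_le hij hjn' (by omega)] at hu
      rw [← hdup, h1]; exact hu
    · rw [aux_splice_get_gt hij hjn' (by omega)] at hv
      have h2 : m + 1 + (j - i) = j + 1 := by omega
      rw [h2] at hv; exact hv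
  · refine ⟨m + (j - i), Or.inr (Or.inr ⟨rfl, h1⟩), ?_, ?_⟩
    · rw [aux_splice_get_gt hij hjn' (by omega)] at hu; exact hu
    · rw [aux_splice_get_gt hij hjn' (by omega)] at hv
      have h2 : m + 1 + (j - i) = m + (j - i) + 1 := by omega
      rw [h2] at hv; exact hv

/-- A trek whose vertices all avoid `Z` yields an m-connecting path. -/
lemma aux_trek_path : ∀ n (W : List V) (jv : ℕ) {a b : V}, W.length = n → a ≠ b →
    PWalk G W a b → PTrek G W jv → (∀ u ∈ W, u ∉ Z) →
    ∃ p, MConnPath G Z p a b := by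
  intro n
  induction n using Nat.strong_induction_on with
  | _ n ih =>
    intro W jv a b hn hab hwk htk hmem
    by_cases hN : W.Nodup
    · -- it is a path; no colliders
      obtain ⟨hc, hh, hl, hlen⟩ := aux_pwalk_iff.mpr hwk
      refine ⟨W, ⟨hc, hN, hh, hl, hlen⟩, hmem a ?_, hmem b ?_, ?_, ?_⟩
      · exact List.mem_iff_getElem?.mpr ⟨0, hwk.2.1⟩
      · exact List.mem_iff_getElem?.mpr ⟨W.length - 1, hwk.2.2.1⟩
      · rintro w ⟨⟨u, v, l₁, l₂, hdec⟩, _⟩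
        exact hmem w (by rw [hdec]; simp)
      · rintro w ⟨u, v, l₁, l₂, hdec, hA1, hA2⟩
        exfalso
        obtain ⟨hu, hw, hv⟩ := aux_pos_of_decomp hdec
        set m := l₁.length
        rcases Nat.lt_or_ge m jv with hmj | hmj
        · exact aux_dir_not_arrow_rev (htk.1 m u w hmj hu hw) hA1
        · exact aux_dir_not_arrow_rev (htk.2 (m+1) w v (by omega) hw hv) hA2
    · obtain ⟨i, j, v, hij, hjn, hiv, hjv⟩ := aux_dup_pos hN
      by_cases hjlast : j = W.length - 1
      · have hvb : v = b := by
          rw [hjlast] at hjv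
          exact Option.some_injective _ (hjv.symm.trans hwk.2.2.1)
        subst hvb
        have hi1 : 1 ≤ i := by
          rcases Nat.eq_zero_or_pos i with h0 | h1
          · rw [h0] at hiv
            exact absurd (Option.some_injective _ (hwk.2.1.symm.trans hiv)) hab
          · exact h1
        refine ih (i+1) (by omega) (W.take (i+1)) jv (by simp; omega) hab ?_ ?_ ?_
        · exact aux_pwalk_take hwk hi1 hiv
        · constructor
          · intro k u vv hk hu hvv
            exact htk.1 k u vv hk (aux_take_get_some hu).2 (aux_take_get_some hvv).2
          · intro k u vv hk hu hvv
            exact htk.2 k u vv hk (aux_take_get_some hu).2 (aux_take_get_some hvv).2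
        · intro u hu; exact hmem u (List.mem_of_mem_take hu)
      · have hjn2 : j + 1 < W.length := by
          have := aux_get_lt hjv; omega
        by_cases hi0 : i = 0
        · subst hi0
          have hva : v = a := Option.some_injective _ (hiv.symm.trans hwk.2.1)
          subst hva
          refine ih (W.length - j) (by omega) (W.drop j) (jv - j) (by simp) hab ?_ ?_ ?_
          · exact aux_pwalk_drop hwk (by omega) hjv
          · constructor
            · intro k u vv hk hu hvv
              rw [aux_drop_get] at hu hvv
              refine htk.1 (j+k) u vv (by omega) hu ?_
              rw [← Nat.add_assoc] at hvv; exact hvv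
            · intro k u vv hk hu hvv
              rw [aux_drop_get] at hu hvv
              refine htk.2 (j+k) u vv (by omega) hu ?_
              rw [← Nat.add_assoc] at hvv; exact hvv
          · intro u hu; exact hmem u (List.mem_of_mem_drop hu)
        · have hdup : W[i]? = W[j]? := hiv.trans hjv.symm
          set jv' := if jv ≤ i then jv else if jv ≤ j then i else jv - (j - i) with hjv'
          refine ih (W.length - (j - i)) (by omega) (Splice W i j) jv'
            (aux_splice_len hij (by omega)) hab (aux_splice_pwalk hwk hij hjn2 hdup) ?_
            (fun u hu => hmem u (aux_splice_subset hu))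
          constructor
          · intro k u vv hk hu hvv
            obtain ⟨m', hcase, hu', hvv'⟩ := aux_splice_edge hij hjn2 hdup hu hvv
            refine htk.1 m' u vv ?_ hu' hvv'
            rcases hcase with ⟨rfl, h⟩ | ⟨rfl, h⟩ | ⟨rfl, h⟩ <;>
              (rw [hjv'] at hk; split_ifs at hk <;> omega)
          · intro k u vv hk hu hvv
            obtain ⟨m', hcase, hu', hvv'⟩ := aux_splice_edge hij hjn2 hdup hu hvv
            refine htk.2 m' u vv ?_ hu' hvv'
            rcases hcase with ⟨rfl, h⟩ | ⟨rfl, h⟩ | ⟨rfl, h⟩ <;>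
              (rw [hjv'] at hk; split_ifs at hk <;> omega)

end Aux6
section Aux7

open List

variable {G : MixedGraph V} {Z : Set V}

/-- Rightward scan along a walk from a tail edge: either the right endpoint of
the edge has a descendant in `Z`, or the rest of the walk is directed. -/
lemma aux_scanR {W : List V} (hadj : PAdj G W) (hok : POK G Z W) :
    ∀ t i (u v : V), W.length - i = t → W[i]? = some u → W[i+1]? = some v → G.dir u v →
    (∃ d ∈ Z, Ancestor G v d) ∨
      (∀ k (x y : V), i ≤ k → W[k]? = some x → W[k+1]? = some y → G.dir x y) := by
  intro t
  induction t using Nat.strong_induction_on with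
  | _ t ih =>
    intro i u v ht hu hv hdir
    by_cases hend : i + 2 < W.length
    · obtain ⟨w2, hw2⟩ := aux_get_total (show i + 2 < W.length from hend)
      by_cases hA : ArrowInto G w2 v
      · exact Or.inl ((hok i u v w2 hu hv hw2).1 ⟨aux_dir_arrow hdir, hA⟩)
      · have hd2 : G.dir v w2 := aux_tail (aux_adj_symm (hadj (i+1) v w2 hv hw2)) hA
        rcases ih (W.length - (i+1)) (by omega) (i+1) v w2 rfl hv hw2 hd2 with ⟨d, hdZ, hda⟩ | hch
        · exact Or.inl ⟨d, hdZ, aux_anc_step hd2 hda⟩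
        · refine Or.inr ?_
          intro k x y hk hx hy
          rcases Nat.eq_or_lt_of_le hk with h1 | h1
          · have hxu : x = u := Option.some_injective _ (by rw [← h1] at hx; exact hx.symm.trans hu)
            have hyv : y = v := Option.some_injective _ (by rw [← h1] at hy; exact hy.symm.trans hv)
            rw [hxu, hyv]; exact hdir
          · exact hch k x y (by omega) hx hy
    · refine Or.inr ?_
      intro k x y hk hx hy
      have hkv : k + 1 < W.length := aux_get_lt hy
      have hki : k = i := by omega
      subst hki
      have hxu : x = u := Option.some_injective _ (hx.symm.trans hu)
      have hyv : y = v := Option.some_injective _ (hy.symm.trans hv)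
      rw [hxu, hyv]; exact hdir

/-- Leftward scan along a walk from a tail edge. -/
lemma aux_scanL {W : List V} (hadj : PAdj G W) (hok : POK G Z W) :
    ∀ j (u v : V), W[j]? = some u → W[j+1]? = some v → G.dir v u →
    (∃ d ∈ Z, Ancestor G u d) ∨
      (∀ k (x y : V), k ≤ j → W[k]? = some x → W[k+1]? = some y → G.dir y x) := by
  intro j
  induction j using Nat.strong_induction_on with
  | _ j ih =>
    intro u v hu hv hdir
    by_cases hj0 : j = 0
    · subst hj0
      refine Or.inr ?_
      intro k x y hk hx hy
      have hk0 : k = 0 := by omega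
      subst hk0
      have hxu : x = u := Option.some_injective _ (hx.symm.trans hu)
      have hyv : y = v := Option.some_injective _ (hy.symm.trans hv)
      rw [hxu, hyv]; exact hdir
    · obtain ⟨w0, hw0⟩ := aux_get_total (show j - 1 < W.length by
        have := aux_get_lt hu; omega)
      have hjj : j - 1 + 1 = j := by omega
      have hw0' : W[j-1]? = some w0 := hw0
      have hu' : W[(j-1)+1]? = some u := by rw [hjj]; exact hu
      by_cases hA : ArrowInto G w0 u
      · refine Or.inl ((hok (j-1) w0 u v hw0' hu' ?_).1 ⟨hA, aux_dir_arrow hdir⟩)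
        have : j - 1 + 2 = j + 1 := by omega
        rw [this]; exact hv
      · have hd0 : G.dir u w0 := aux_tail (hadj (j-1) w0 u hw0' hu') hA
        rcases ih (j-1) (by omega) w0 u hw0' hu' hd0 with ⟨d, hdZ, hda⟩ | hch
        · exact Or.inl ⟨d, hdZ, aux_anc_step hd0 hda⟩
        · refine Or.inr ?_
          intro k x y hk hx hy
          rcases Nat.eq_or_lt_of_le hk with h1 | h1
          · subst h1
            have hxu : x = u := Option.some_injective _ (hx.symm.trans hu)
            have hyv : y = v := Option.some_injective _ (hy.symm.trans hv)
            rw [hxu, hyv]; exact hdir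
          · exact hch k x y (by omega) hx hy

end Aux7
section Aux8

open List

variable {G : MixedGraph V} {Z : Set V}

lemma aux_anti_get_le {W : List V} {i j m : ℕ} (hj : j < W.length) (hm : m ≤ j) :
    (W.take (j+1) ++ W.drop (i+1))[m]? = W[m]? := by
  rw [List.getElem?_append, if_pos (by simp; omega), aux_take_get (by omega)]

lemma aux_anti_get_gt {W : List V} {i j m : ℕ} (hij : i < j) (hj : j < W.length) (hm : j < m) :
    (W.take (j+1) ++ W.drop (i+1))[m]? = W[m - (j - i)]? := by
  rw [List.getElem?_append, if_neg (by simp; omega), aux_drop_get]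
  congr 1
  simp
  omega

lemma aux_anti_len {W : List V} {i j : ℕ} (hij : i < j) (hj : j < W.length) :
    (W.take (j+1) ++ W.drop (i+1)).length = W.length + (j - i) := by
  simp
  omega

/-- Every m-connecting walk contains an m-connecting path. -/
lemma aux_wp : ∀ n (W : List V) {a b : V}, W.length = n → a ≠ b →
    PMCW G Z W a b → ∃ p, MConnPath G Z p a b := by
  intro n
  induction n using Nat.strong_induction_on with
  | _ n ih =>
    intro W a b hn hab h
    by_cases hN : W.Nodup
    · exact ⟨W, aux_conv2 h hN⟩
    obtain ⟨i, j, v, hij, hjn, hiv, hjv⟩ := aux_dup_pos hN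
    obtain ⟨hwk, haZ, hbZ, hok⟩ := h
    have hadj : PAdj G W := hwk.1
    by_cases hjlast : j = W.length - 1
    · -- v = b : take prefix up to i
      have hvb : v = b := by
        rw [hjlast] at hjv
        exact Option.some_injective _ (hjv.symm.trans hwk.2.2.1)
      subst hvb
      have hi1 : 1 ≤ i := by
        rcases Nat.eq_zero_or_pos i with h0 | h1
        · rw [h0] at hiv; exact absurd (Option.some_injective _ (hwk.2.1.symm.trans hiv)) hab
        · exact h1
      refine ih (i+1) (by omega) (W.take (i+1)) (by simp; omega) hab
        ⟨aux_pwalk_take hwk hi1 hiv, haZ, hbZ, ?_⟩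
      intro m u w vv hu hw hvv
      exact hok m u w vv (aux_take_get_some hu).2 (aux_take_get_some hw).2 (aux_take_get_some hvv).2
    · have hjn2 : j + 1 < W.length := by
        have := aux_get_lt hjv; omega
      by_cases hi0 : i = 0
      · -- v = a : drop to j
        subst hi0
        have hva : v = a := Option.some_injective _ (hiv.symm.trans hwk.2.1)
        subst hva
        refine ih (W.length - j) (by omega) (W.drop j) (by simp) hab
          ⟨aux_pwalk_drop hwk (by omega) hjv, haZ, hbZ, ?_⟩
        intro m u w vv hu hw hvv
        rw [aux_drop_get] at hu hw hvv
        refine hok (j+m) u w vv hu ?_ ?_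
        · rw [← Nat.add_assoc] at hw; exact hw
        · rw [← Nat.add_assoc] at hvv; exact hvv
      · -- middle duplicate
        have hdup : W[i]? = W[j]? := hiv.trans hjv.symm
        have hi1 : 1 ≤ i := by omega
        obtain ⟨u1, hu1⟩ := aux_get_total (show i-1 < W.length by omega)
        obtain ⟨w1, hw1⟩ := aux_get_total (show i+1 < W.length by omega)
        obtain ⟨u2, hu2⟩ := aux_get_total (show j-1 < W.length by omega)
        obtain ⟨w2, hw2⟩ := aux_get_total (show j+1 < W.length by omega)
        have hiv' : W[(i-1)+1]? = some v := by
          have e : i - 1 + 1 = i := by omega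
          rw [e]; exact hiv
        have hw1' : W[(i-1)+2]? = some w1 := by
          have e : i - 1 + 2 = i + 1 := by omega
          rw [e]; exact hw1
        have hjv' : W[(j-1)+1]? = some v := by
          have e : j - 1 + 1 = j := by omega
          rw [e]; exact hjv
        have hw2' : W[(j-1)+2]? = some w2 := by
          have e : j - 1 + 2 = j + 1 := by omega
          rw [e]; exact hw2
        have hoki := hok (i-1) u1 v w1 hu1 hiv' hw1'
        have hokj := hok (j-1) u2 v w2 hu2 hjv' hw2'
        have hNC : ¬ Heads G u1 v w2 → v ∉ Z := by
          intro hnj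
          by_cases hA : ArrowInto G u1 v
          · exact hokj.2 (fun hh => hnj ⟨hA, hh.2⟩)
          · exact hoki.2 (fun hh => hA hh.1)
        have hsplice : (Heads G u1 v w2 → ∃ d ∈ Z, Ancestor G v d) →
            ∃ p, MConnPath G Z p a b := by
          intro hJdesc
          refine ih (W.length - (j - i)) (by omega) (Splice W i j)
            (aux_splice_len hij (by omega)) hab
            ⟨aux_splice_pwalk hwk hij hjn2 hdup, haZ, hbZ, ?_⟩
          intro m u w vv hu hw hvv
          rcases aux_splice_cases hij hjn2 hdup hu hw hvv with ⟨m', h1, h2, h3⟩ | ⟨hmi, h1, h2, h3, h4⟩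
          · exact hok m' u w vv h1 h2 h3
          · have hwv : w = v := Option.some_injective _ (h2.symm.trans hiv)
            have huu1 : u = u1 := Option.some_injective _ (h1.symm.trans hu1)
            have hvw2 : vv = w2 := Option.some_injective _ (h4.symm.trans hw2)
            subst hwv; subst huu1; subst hvw2
            exact ⟨fun hH => hJdesc hH, fun hH => hNC hH⟩
        by_cases hH1 : Heads G u1 v w1
        · exact hsplice (fun _ => hoki.1 hH1)
        · by_cases hH2 : Heads G u2 v w2
          · exact hsplice (fun _ => hokj.1 hH2)
          · have hvZ : v ∉ Z := hoki.2 hH1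
            by_cases hJH : Heads G u1 v w2
            · -- scans
              have hd1 : G.dir v w1 :=
                aux_tail (aux_adj_symm (hadj i v w1 hiv hw1)) (fun hA => hH1 ⟨hJH.1, hA⟩)
              have hd2 : G.dir v u2 :=
                aux_tail (hadj (j-1) u2 v hu2 hjv') (fun hA => hH2 ⟨hA, hJH.2⟩)
              rcases aux_scanR hadj hok (W.length - i) i v w1 rfl hiv hw1 hd1 with ⟨d, hdZ, hda⟩ | hchR
              · exact hsplice (fun _ => ⟨d, hdZ, aux_anc_step hd1 hda⟩)
              · rcases aux_scanL hadj hok (j-1) u2 v hu2 hjv' hd2 with ⟨d, hdZ, hda⟩ | hchL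
                · exact hsplice (fun _ => ⟨d, hdZ, aux_anc_step hd2 hda⟩)
                · -- trek case
                  -- every vertex of W avoids Z
                  have hWnotZ : ∀ (idx : ℕ) (u : V), W[idx]? = some u → u ∉ Z := by
                    intro idx u hu
                    by_cases h0 : idx = 0
                    · subst h0
                      have : u = a := Option.some_injective _ (hu.symm.trans hwk.2.1)
                      rw [this]; exact haZ
                    by_cases hlast : idx = W.length - 1
                    · subst hlast
                      have : u = b := Option.some_injective _ (hu.symm.trans hwk.2.2.1)
                      rw [this]; exact hbZ
                    have hidxn : idx < W.length := aux_get_lt hu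
                    by_cases hidxj : idx = j
                    · subst hidxj
                      have : u = v := Option.some_injective _ (hu.symm.trans hjv)
                      rw [this]; exact hvZ
                    obtain ⟨p0, hp0⟩ := aux_get_total (show idx - 1 < W.length by omega)
                    obtain ⟨p2, hp2⟩ := aux_get_total (show idx + 1 < W.length by omega)
                    have hu' : W[(idx-1)+1]? = some u := by
                      have e : idx - 1 + 1 = idx := by omega
                      rw [e]; exact hu
                    have hp2' : W[(idx-1)+2]? = some p2 := by
                      have e : idx - 1 + 2 = idx + 1 := by omega
                      rw [e]; exact hp2
                    rcases Nat.lt_or_ge idx j with hcase | hcase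
                    · -- left-chain: tail towards the left at idx
                      have hd : G.dir u p0 := hchL (idx-1) p0 u (by omega) hp0 hu'
                      exact (hok (idx-1) p0 u p2 hp0 hu' hp2').2
                        (fun hh => aux_dir_not_arrow_rev hd hh.1)
                    · -- right-chain: idx > j ≥ i+1? idx ≥ i anyway
                      have hd : G.dir u p2 := hchR idx u p2 (by omega) hu hp2
                      exact (hok (idx-1) p0 u p2 hp0 hu' hp2').2
                        (fun hh => aux_dir_not_arrow_rev hd hh.2)
                  set T := W.take (j+1) ++ W.drop (i+1) with hT
                  have hTlen : T.length = W.length + (j - i) := aux_anti_len hij (by omega)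
                  have hTwalk : PWalk G T a b := by
                    refine ⟨?_, ?_, ?_, ?_⟩
                    · intro m u vv hu hvv
                      rcases Nat.lt_or_ge m j with hm | hm
                      · rw [aux_anti_get_le (by omega) (by omega)] at hu
                        rw [aux_anti_get_le (by omega) (by omega)] at hvv
                        exact hadj m u vv hu hvv
                      rcases Nat.eq_or_lt_of_le hm with h1 | h1
                      · -- m = j : junction
                        rw [aux_anti_get_le (by omega) (by omega)] at hu
                        rw [aux_anti_get_gt hij (by omega) (by omega)] at hvv
                        have e : m + 1 - (j - i) = i + 1 := by omega
                        rw [e] at hvv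
                        have huv : u = v := Option.some_injective _ (by rw [← h1] at hu; exact hu.symm.trans hjv)
                        have hvw1 : vv = w1 := Option.some_injective _ (hvv.symm.trans hw1)
                        rw [huv, hvw1]
                        exact aux_adj_of_dir hd1
                      · rw [aux_anti_get_gt hij (by omega) (by omega)] at hu
                        rw [aux_anti_get_gt hij (by omega) (by omega)] at hvv
                        have e : m + 1 - (j - i) = m - (j - i) + 1 := by omega
                        rw [e] at hvv
                        exact hadj (m - (j-i)) u vv hu hvv
                    · rw [aux_anti_get_le (by omega) (by omega)]; exact hwk.2.1
                    · rw [hTlen]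
                      rw [aux_anti_get_gt hij (by omega) (by omega)]
                      have e : W.length + (j - i) - 1 - (j - i) = W.length - 1 := by omega
                      rw [e]; exact hwk.2.2.1
                    · omega
                  have hTtrek : PTrek G T j := by
                    constructor
                    · intro k u vv hk hu hvv
                      rw [aux_anti_get_le (by omega) (by omega)] at hu
                      rw [aux_anti_get_le (by omega) (by omega)] at hvv
                      exact hchL k u vv (by omega) hu hvv
                    · intro k u vv hk hu hvv
                      rcases Nat.eq_or_lt_of_le hk with h1 | h1
                      · rw [aux_anti_get_le (by omega) (by omega)] at hu
                        rw [aux_anti_get_gt hij (by omega) (by omega)] at hvv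
                        have e : k + 1 - (j - i) = i + 1 := by omega
                        rw [e] at hvv
                        have huv : u = v := Option.some_injective _ (by rw [← h1] at hu; exact hu.symm.trans hjv)
                        have hvw1 : vv = w1 := Option.some_injective _ (hvv.symm.trans hw1)
                        rw [huv, hvw1]
                        exact hd1
                      · rw [aux_anti_get_gt hij (by omega) (by omega)] at hu
                        rw [aux_anti_get_gt hij (by omega) (by omega)] at hvv
                        have e : k + 1 - (j - i) = k - (j - i) + 1 := by omega
                        rw [e] at hvv
                        exact hchR (k - (j-i)) u vv (by omega) hu hvv
                  have hTmem : ∀ u ∈ T, u ∉ Z := by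
                    intro u hu
                    rcases List.mem_append.mp hu with hu | hu
                    · obtain ⟨m, hm⟩ := List.mem_iff_getElem?.mp hu
                      exact hWnotZ m u (aux_take_get_some hm).2
                    · obtain ⟨m, hm⟩ := List.mem_iff_getElem?.mp hu
                      rw [aux_drop_get] at hm
                      exact hWnotZ (i+1+m) u hm
                  exact aux_trek_path T.length T j rfl hab hTwalk hTtrek hTmem
            · exact hsplice (fun hH => absurd hH hJH)

end Aux8
section Aux9

open List

variable {G : MixedGraph V}

/-- `v` is an ancestor of `x` or of `y`. -/
def AnXY (G : MixedGraph V) (x y v : V) : Prop :=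
  Ancestor G v x ∨ Ancestor G v y

/-- The analogue of D-SEP(y,x): vertices other than `x, y` joined to `y` by a
collider walk all of whose vertices are ancestors of `x` or `y`. -/
def DSet (G : MixedGraph V) (x y : V) : Set V :=
  {v | v ≠ x ∧ v ≠ y ∧ ∃ W, PColWalk G W v y ∧ ∀ u ∈ W, AnXY G x y u}

lemma aux_x_notin_D {x y : V} : x ∉ DSet G x y := fun h => h.1 rfl

lemma aux_y_notin_D {x y : V} : y ∉ DSet G x y := fun h => h.2.1 rfl

lemma aux_D_AnXY {x y v : V} (h : v ∈ DSet G x y) : AnXY G x y v := by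
  obtain ⟨_, _, W, hcw, hAn⟩ := h
  exact hAn v (List.mem_iff_getElem?.mpr ⟨0, hcw.1.2.1⟩)

lemma aux_D_sub_MB {x y : V} : DSet G x y ⊆ MarkovBlanket G y \ {x} := by
  rintro v ⟨hvx, hvy, W, hcw, hAn⟩
  refine ⟨⟨hvy, ?_⟩, hvx⟩
  by_cases hadj : G.adj v y
  · exact Or.inl hadj
  · refine Or.inr ⟨hadj, ?_⟩
    obtain ⟨W', hW1, hW2, _⟩ := aux_colwalk_nodup W.length W rfl hvy hcw
    exact ⟨W', aux_conv3 hW1 hW2⟩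

/-- Positional inducing walk relative to `x, y`: every intermediate vertex is
a collider and an ancestor of `x` or `y`. -/
def PInduc (G : MixedGraph V) (x y : V) (W : List V) : Prop :=
  PWalk G W x y ∧ ∀ i (u w v : V), W[i]? = some u → W[i+1]? = some w → W[i+2]? = some v →
    Heads G u w v ∧ AnXY G x y w

lemma aux_cons_get_zero (w : V) (L : List V) : (w :: L)[0]? = some w := by simp

lemma aux_cons_get_succ (w : V) (L : List V) (m : ℕ) : (w :: L)[m+1]? = L[m]? := by simp

/-- Positional ancestor along a directed chain. -/
lemma aux_run_anc {p : List V} (hc : List.Chain' G.dir p) :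
    ∀ (t : ℕ) (w q : V), p[0]? = some w → p[t]? = some q → Ancestor G w q := by
  have hcp : ∀ i (u v : V), p[i]? = some u → p[i+1]? = some v → G.dir u v :=
    aux_chain'_pos.mp hc
  intro t
  induction t with
  | zero => intro w q h0 ht; exact (Option.some_injective _ (h0.symm.trans ht)) ▸ aux_anc_refl G w
  | succ t ih =>
    intro w q h0 ht
    obtain ⟨qt, hqt⟩ := aux_get_total (show t < p.length by have := aux_get_lt ht; omega)
    exact aux_anc_trans (ih w qt h0 hqt) (aux_anc_step (hcp t qt q hqt ht) (aux_anc_refl G q))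

/-- From a m-connecting walk given `DSet`, extract an inducing walk. -/
lemma aux_ind {x y : V} : ∀ n (W : List V), W.length = n →
    PMCW G (DSet G x y) W x y → ∃ W', PInduc G x y W' := by
  intro n
  induction n using Nat.strong_induction_on with
  | _ n ih =>
    intro W hn h
    obtain ⟨hwk, _, _, hok⟩ := h
    have hadj : PAdj G W := hwk.1
    -- SUF k: all triples at index ≥ k are colliders with AnXY middle
    set SUF : ℕ → Prop := fun k => ∀ m (u w v : V), k ≤ m → W[m]? = some u →
      W[m+1]? = some w → W[m+2]? = some v → Heads G u w v ∧ AnXY G x y w with hSUF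
    have hstep : ∀ k, SUF (k+1) → SUF k ∨
        ((∃ W', PInduc G x y W') ∨ (∃ W2 : List V, W2.length < n ∧ PMCW G (DSet G x y) W2 x y)) := by
      intro k hsuf
      by_cases hkn : k + 2 < W.length
      · obtain ⟨u, hu⟩ := aux_get_total (show k < W.length by omega)
        obtain ⟨w, hw⟩ := aux_get_total (show k+1 < W.length by omega)
        obtain ⟨v2, hv2⟩ := aux_get_total (show k+2 < W.length by omega)
        have hokk := hok k u w v2 hu hw hv2
        by_cases hH : Heads G u w v2
        · -- collider: AnXY w; SUF k
          obtain ⟨d, hdD, hwd⟩ := hokk.1 hH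
          have hAnw : AnXY G x y w := by
            rcases aux_D_AnXY hdD with h1 | h1
            · exact Or.inl (aux_anc_trans hwd h1)
            · exact Or.inr (aux_anc_trans hwd h1)
          refine Or.inl ?_
          intro m u' w' v' hm hu' hw' hv'
          rcases Nat.eq_or_lt_of_le hm with h1 | h1
          · have e1 : u' = u := Option.some_injective _ (by rw [← h1] at hu'; exact hu'.symm.trans hu)
            have e2 : w' = w := Option.some_injective _ (by rw [← h1] at hw'; exact hw'.symm.trans hw)
            have e3 : v' = v2 := Option.some_injective _ (by rw [← h1] at hv'; exact hv'.symm.trans hv2)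
            rw [e1, e2, e3]; exact ⟨hH, hAnw⟩
          · exact hsuf m u' w' v' (by omega) hu' hw' hv'
        · -- non-collider
          have hwD : w ∉ DSet G x y := hokk.2 hH
          by_cases hwx : w = x
          · -- inducing walk: drop (k+1)
            refine Or.inr (Or.inl ⟨W.drop (k+1), ?_, ?_⟩)
            · exact aux_pwalk_drop hwk (by omega) (by rw [hwx] at hw; exact hw)
            · intro m u' w' v' hu' hw' hv'
              rw [aux_drop_get] at hu' hw' hv'
              refine hsuf (k+1+m) u' w' v' (by omega) hu' ?_ ?_
              · rw [← Nat.add_assoc] at hw'; exact hw'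
              · rw [← Nat.add_assoc] at hv'; exact hv'
          by_cases hwy : w = y
          · -- restart with shorter prefix
            refine Or.inr (Or.inr ⟨W.take (k+2), by simp; omega, ?_, aux_x_notin_D, aux_y_notin_D, ?_⟩)
            · exact aux_pwalk_take hwk (by omega) (by rw [hwy] at hw; exact hw)
            · intro m u' w' v' hu' hw' hv'
              exact hok m u' w' v' (aux_take_get_some hu').2 (aux_take_get_some hw').2
                (aux_take_get_some hv').2
          · -- impossible
            exfalso
            have hmemD : AnXY G x y w → False := by
              intro hAn
              apply hwD
              refine ⟨hwx, hwy, w :: W.drop (k+2), ⟨⟨?_, ?_, ?_, ?_⟩, ?_⟩, ?_⟩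
              · -- PAdj
                intro m u' v' hu' hv'
                rcases m with _ | m
                · rw [aux_cons_get_zero] at hu'
                  rw [aux_cons_get_succ, aux_drop_get] at hv'
                  have e1 : u' = w := (Option.some_injective _ hu'.symm)
                  rw [e1]
                  simp at hv'
                  exact hadj (k+1) w v' hw hv'
                · rw [aux_cons_get_succ, aux_drop_get] at hu'
                  rw [aux_cons_get_succ, aux_drop_get] at hv'
                  refine hadj (k+2+m) u' v' hu' ?_
                  rw [← Nat.add_assoc] at hv'; exact hv'
              · rw [aux_cons_get_zero]
              · have hlen : (w :: W.drop (k+2)).length = W.length - k - 1 := by simp; omega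
                rw [hlen]
                have e : W.length - k - 1 - 1 = (W.length - k - 2) := by omega
                rw [e]
                rcases Nat.eq_zero_or_pos (W.length - k - 2 - 0) with h0 | hpos
                · omega
                · have e2 : W.length - k - 2 = (W.length - k - 2 - 1) + 1 := by omega
                  rw [e2, aux_cons_get_succ, aux_drop_get]
                  have e3 : k + 2 + (W.length - k - 2 - 1) = W.length - 1 := by omega
                  rw [e3]; exact hwk.2.2.1
              · simp; omega
              · -- collider triples
                intro m u' w' v' hu' hw' hv'
                rcases m with _ | m
                · rw [aux_cons_get_zero] at hu'
                  rw [aux_cons_get_succ, aux_drop_get] at hw'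
                  rw [aux_cons_get_succ, aux_drop_get] at hv'
                  simp at hw' hv'
                  have e1 : u' = w := (Option.some_injective _ hu'.symm)
                  rw [e1]
                  have h1 := hsuf (k+1) w w' v' (by omega) hw (by
                    have e : k + 1 + 1 = k + 2 := by omega
                    rw [e]; exact hw') (by
                    have e : k + 1 + 2 = k + 3 := by omega
                    rw [e]
                    have e2 : k + 2 + 1 = k + 3 := by omega
                    rw [e2] at hv'; exact hv')
                  exact h1.1
                · rw [aux_cons_get_succ, aux_drop_get] at hu' hw' hv'
                  have h1 := hsuf (k+2+m) u' w' v' (by omega) hu' (by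
                    rw [← Nat.add_assoc] at hw'; exact hw') (by
                    rw [← Nat.add_assoc] at hv'; exact hv')
                  exact h1.1
              · -- all members AnXY
                intro u' hu'
                rcases List.mem_cons.mp hu' with h1 | h1
                · rw [h1]; exact hAn
                · obtain ⟨m, hm⟩ := List.mem_iff_getElem?.mp h1
                  rw [aux_drop_get] at hm
                  by_cases hlast : k + 2 + m = W.length - 1
                  · have : u' = y := Option.some_injective _ (by rw [hlast] at hm; exact hm.symm.trans hwk.2.2.1)
                    rw [this]; exact Or.inr (aux_anc_refl G y)
                  · have hmn : k + 2 + m < W.length := aux_get_lt hm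
                    obtain ⟨q0, hq0⟩ := aux_get_total (show k + 1 + m < W.length by omega)
                    obtain ⟨q2, hq2⟩ := aux_get_total (show k + 2 + m + 1 < W.length by omega)
                    have h2 := hsuf (k+1+m) q0 u' q2 (by omega) hq0 (by
                      have e : k + 1 + m + 1 = k + 2 + m := by omega
                      rw [e]; exact hm) (by
                      have e : k + 1 + m + 2 = k + 2 + m + 1 := by omega
                      rw [e]; exact hq2)
                    exact h2.2
            -- ¬ dir w v2
            have hndir : ¬ G.dir w v2 := by
              intro hd
              apply hmemD
              by_cases hlast : k + 2 = W.length - 1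
              · have : v2 = y := Option.some_injective _ (by rw [hlast] at hv2; exact hv2.symm.trans hwk.2.2.1)
                exact Or.inr (aux_anc_step hd (this ▸ aux_anc_refl G v2))
              · obtain ⟨q2, hq2⟩ := aux_get_total (show k + 3 < W.length by
                  have := aux_get_lt hv2; omega)
                have h2 := hsuf (k+1) w v2 q2 (by omega) hw (by
                  have e : k + 1 + 1 = k + 2 := by omega
                  rw [e]; exact hv2) (by
                  have e : k + 1 + 2 = k + 3 := by omega
                  rw [e]; exact hq2)
                rcases h2.2 with h3 | h3
                · exact Or.inl (aux_anc_step hd h3)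
                · exact Or.inr (aux_anc_step hd h3)
            have hA2 : ArrowInto G v2 w := by
              rcases hadj (k+1) w v2 hw hv2 with h1 | h1 | h1
              · exact absurd h1 hndir
              · exact Or.inl h1
              · exact Or.inr (G.bidir_symm _ _ h1)
            have hAu : ¬ ArrowInto G u w := fun hA => hH ⟨hA, hA2⟩
            have hdwu : G.dir w u := aux_tail (hadj k u w hu hw) hAu
            -- leftward chain contradiction
            have chainL : ∀ m, ∀ (p q : V), W[m]? = some p → W[m+1]? = some q →
                G.dir q p → Ancestor G w p → False := by
              intro m
              induction m using Nat.strong_induction_on with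
              | _ m ihm =>
                intro p q hp hq hdir hanc
                by_cases hm0 : m = 0
                · subst hm0
                  have : p = x := Option.some_injective _ (hp.symm.trans hwk.2.1)
                  exact hmemD (Or.inl (this ▸ hanc))
                · obtain ⟨p0, hp0⟩ := aux_get_total (show m - 1 < W.length by
                    have := aux_get_lt hp; omega)
                  have hp' : W[(m-1)+1]? = some p := by
                    have e : m - 1 + 1 = m := by omega
                    rw [e]; exact hp
                  have hq' : W[(m-1)+2]? = some q := by
                    have e : m - 1 + 2 = m + 1 := by omega
                    rw [e]; exact hq
                  by_cases hA : ArrowInto G p0 p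
                  · obtain ⟨d, hdD, hpd⟩ := (hok (m-1) p0 p q hp0 hp' hq').1 ⟨hA, Or.inl hdir⟩
                    have hAnp : AnXY G x y p := by
                      rcases aux_D_AnXY hdD with h1 | h1
                      · exact Or.inl (aux_anc_trans hpd h1)
                      · exact Or.inr (aux_anc_trans hpd h1)
                    rcases hAnp with h1 | h1
                    · exact hmemD (Or.inl (aux_anc_trans hanc h1))
                    · exact hmemD (Or.inr (aux_anc_trans hanc h1))
                  · have hdp : G.dir p p0 := aux_tail (hadj (m-1) p0 p hp0 hp') hA
                    exact ihm (m-1) (by omega) p0 p hp0 hp' hdp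
                      (aux_anc_trans hanc (aux_anc_step hdp (aux_anc_refl G p0)))
            exact chainL k u w hu hw hdwu (aux_anc_step hdwu (aux_anc_refl G u))
      · -- no triple at k
        refine Or.inl ?_
        intro m u' w' v' hm hu' hw' hv'
        rcases Nat.eq_or_lt_of_le hm with h1 | h1
        · exfalso
          have := aux_get_lt hv'
          omega
        · exact hsuf m u' w' v' (by omega) hu' hw' hv'
    -- descend from SUF n to SUF 0
    have hdesc : ∀ t, SUF (n - t) ∨
        ((∃ W', PInduc G x y W') ∨ (∃ W2 : List V, W2.length < n ∧ PMCW G (DSet G x y) W2 x y)) := by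
      intro t
      induction t with
      | zero =>
        refine Or.inl ?_
        intro m u' w' v' hm hu' hw' hv'
        exfalso
        have := aux_get_lt hv'
        omega
      | succ t iht =>
        rcases iht with hsuf | hres
        · by_cases h0 : n - t = 0
          · refine Or.inl ?_
            have e : n - (t+1) = 0 := by omega
            rw [e]
            rw [h0] at hsuf
            exact hsuf
          · have e : n - t = (n - (t+1)) + 1 := by omega
            rw [e] at hsuf
            rcases hstep (n - (t+1)) hsuf with h1 | h1
            · exact Or.inl h1
            · exact Or.inr h1
        · exact Or.inr hres
    rcases hdesc n with hsuf | hres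
    · -- W itself is inducing
      refine ⟨W, hwk, ?_⟩
      intro i u w v hu hw hv
      exact hsuf i u w v (by omega) hu hw hv
    · rcases hres with h1 | ⟨W2, hW2len, hW2⟩
      · exact h1
      · exact ih W2.length (by omega) W2 rfl hW2

end Aux9
section Aux10

open List

variable {G : MixedGraph V}

lemma aux_app_get_lt {A B : List V} {m : ℕ} (h : m < A.length) : (A++B)[m]? = A[m]? := by
  rw [List.getElem?_append, if_pos h]

lemma aux_app_get_ge {A B : List V} {m : ℕ} (h : A.length ≤ m) :
    (A++B)[m]? = B[m - A.length]? := by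
  rw [List.getElem?_append, if_neg (by omega)]

lemma aux_rev_get {p : List V} {m : ℕ} (h : m < p.length) :
    p.reverse[m]? = p[p.length - 1 - m]? := List.getElem?_reverse h

/-- Generalized walk condition: colliders have a descendant in `Z0` or are
ancestors of `x` or `y`; non-colliders avoid `Z0`. -/
def PGen (G : MixedGraph V) (x y : V) (Z0 : Set V) (W : List V) : Prop :=
  ∀ i (u w v : V), W[i]? = some u → W[i+1]? = some w → W[i+2]? = some v →
    (Heads G u w v → ((∃ d ∈ Z0, Ancestor G w d) ∨ AnXY G x y w)) ∧
    (¬ Heads G u w v → w ∉ Z0)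

/-- A bad position: a collider with no descendant in `Z0`. -/
def BadAt (G : MixedGraph V) (Z0 : Set V) (W : List V) (m : ℕ) : Prop :=
  ∃ u w v, W[m]? = some u ∧ W[m+1]? = some w ∧ W[m+2]? = some v ∧
    Heads G u w v ∧ ¬ ∃ d ∈ Z0, Ancestor G w d

lemma aux_bad_lt {Z0 : Set V} {W : List V} {m : ℕ} (h : BadAt G Z0 W m) : m + 2 < W.length := by
  obtain ⟨u, w, v, _, _, hv, _, _⟩ := h
  exact aux_get_lt hv

lemma aux_bad_finite (Z0 : Set V) (W : List V) : {m | BadAt G Z0 W m}.Finite :=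
  (Set.finite_Iio W.length).subset (fun m hm => by
    simp only [Set.mem_Iio]
    have := aux_bad_lt hm
    omega)

lemma aux_s2 {x y : V} {Z0 : Set V} (hx0 : x ∉ Z0) (hy0 : y ∉ Z0) (hxy : x ≠ y) :
    ∀ nb (W : List V), {m | BadAt G Z0 W m}.ncard = nb →
    PWalk G W x y → PGen G x y Z0 W → ∃ p, MConnPath G Z0 p x y := by
  intro nb
  induction nb using Nat.strong_induction_on with
  | _ nb ihb =>
    intro W hnb hwk hgen
    classical
    by_cases hzero : {m | BadAt G Z0 W m} = ∅
    · -- no bad positions: it is an m-connecting walk given Z0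
      refine aux_wp W.length W rfl hxy ⟨hwk, hx0, hy0, ?_⟩
      intro i u w v hu hw hv
      refine ⟨?_, (hgen i u w v hu hw hv).2⟩
      intro hH
      by_contra hnd
      have hmem : i ∈ {m | BadAt G Z0 W m} := ⟨u, w, v, hu, hw, hv, hH, hnd⟩
      rw [hzero] at hmem
      exact absurd hmem (Set.notMem_empty i)
    · have hne : ∃ m, BadAt G Z0 W m := by
        rcases Set.nonempty_iff_ne_empty.mpr hzero with ⟨m, hm⟩
        exact ⟨m, hm⟩
      set k := Nat.find hne with hkdef
      have hk : BadAt G Z0 W k := Nat.find_spec hne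
      have hmin : ∀ m, m < k → ¬ BadAt G Z0 W m := fun m hm => Nat.find_min hne hm
      have hkmem : k ∈ {m | BadAt G Z0 W m} := hk
      have hfin := aux_bad_finite (G := G) Z0 W
      obtain ⟨u, w, v2, hu, hw, hv2, hH, hnd⟩ := hk
      have hkn : k + 2 < W.length := aux_get_lt hv2
      have hwZ0 : w ∉ Z0 := fun h => hnd ⟨w, h, aux_anc_refl G w⟩
      have hdescZ0 : ∀ q, Ancestor G w q → q ∉ Z0 := fun q hq hqZ => hnd ⟨q, hqZ, hq⟩
      have hAnw : AnXY G x y w := by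
        rcases (hgen k u w v2 hu hw hv2).1 hH with h1 | h1
        · exact absurd h1 hnd
        · exact h1
      -- measure decrease helper
      have hcard : ∀ (W' : List V) (g : ℕ → ℕ),
          (∀ m, BadAt G Z0 W' m → BadAt G Z0 W (g m) ∧ k < g m) →
          (∀ m1 m2, BadAt G Z0 W' m1 → BadAt G Z0 W' m2 → g m1 = g m2 → m1 = m2) →
          {m | BadAt G Z0 W' m}.ncard < nb := by
        intro W' g hmap hinj
        have himg : g '' {m | BadAt G Z0 W' m} ⊆ {m | BadAt G Z0 W m} \ {k} := by
          rintro q ⟨m, hm, rfl⟩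
          exact ⟨(hmap m hm).1, by
            have := (hmap m hm).2
            simp
            omega⟩
        calc {m | BadAt G Z0 W' m}.ncard
            = (g '' {m | BadAt G Z0 W' m}).ncard := (Set.ncard_image_of_injOn
              (fun m1 hm1 m2 hm2 he => hinj m1 m2 hm1 hm2 he)).symm
          _ ≤ ({m | BadAt G Z0 W m} \ {k}).ncard := Set.ncard_le_ncard himg
              (hfin.subset Set.diff_subset)
          _ < {m | BadAt G Z0 W m}.ncard := Set.ncard_diff_singleton_lt_of_mem hkmem hfin
          _ = nb := hnb
      by_cases hwx : w = x
      · -- truncate to the suffix from k+1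
        subst hwx
        refine ihb {m | BadAt G Z0 (W.drop (k+1)) m}.ncard ?_ (W.drop (k+1)) rfl
          (aux_pwalk_drop hwk (by omega) hw) ?_
        · refine hcard (W.drop (k+1)) (fun m => m + (k+1)) ?_ ?_
          · intro m hm
            obtain ⟨u', w', v', hu', hw', hv', hH', hnd'⟩ := hm
            rw [aux_drop_get] at hu' hw' hv'
            have e1 : k + 1 + m = m + (k+1) := by omega
            have e2 : k + 1 + (m+1) = m + (k+1) + 1 := by omega
            have e3 : k + 1 + (m+2) = m + (k+1) + 2 := by omega
            rw [e1] at hu'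
            rw [e2] at hw'
            rw [e3] at hv'
            refine ⟨⟨u', w', v', hu', hw', hv', hH', hnd'⟩, ?_⟩
            show k < m + (k+1)
            omega
          · intro m1 m2 _ _ he
            have he' : m1 + (k+1) = m2 + (k+1) := he
            omega
        · intro i u' w' v' hu' hw' hv'
          rw [aux_drop_get] at hu' hw' hv'
          refine hgen (k+1+i) u' w' v' hu' ?_ ?_
          · rw [← Nat.add_assoc] at hw'; exact hw'
          · rw [← Nat.add_assoc] at hv'; exact hv'
      by_cases hwy : w = y
      · -- truncate to the prefix ending at k+1
        subst hwy
        refine ihb {m | BadAt G Z0 (W.take (k+2)) m}.ncard ?_ (W.take (k+2)) rfl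
          (aux_pwalk_take hwk (by omega) hw) ?_
        · refine hcard (W.take (k+2)) (fun m => m) ?_ (fun m1 m2 _ _ he => he)
          · intro m hm
            exfalso
            obtain ⟨u', w', v', hu', hw', hv', hH', hnd'⟩ := hm
            obtain ⟨hmlt, hv'W⟩ := aux_take_get_some hv'
            refine hmin m (by omega) ⟨u', w', v', (aux_take_get_some hu').2,
              (aux_take_get_some hw').2, hv'W, hH', hnd'⟩
        · intro i u' w' v' hu' hw' hv'
          exact hgen i u' w' v' (aux_take_get_some hu').2 (aux_take_get_some hw').2
            (aux_take_get_some hv').2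
      · -- reroute along a directed path
        have hxyne : w ≠ x := hwx
        rcases hAnw with hAnx | hAny
        · -- w ancestor of x: replace prefix by reversed directed path
          rcases hAnx with heq | ⟨p, hp⟩
          · exact absurd heq hwx
          obtain ⟨hpc, hpN, hph, hpl, hplen⟩ := hp
          have hpd := aux_chain'_pos.mp hpc
          set np := p.length with hnp
          have hp0 : p[0]? = some w := aux_head?_pos.mp hph
          have hpL : p[np-1]? = some x := aux_getLast?_pos.mp hpl
          have hpmemZ : ∀ (t : ℕ) (q : V), p[t]? = some q → q ∉ Z0 := by
            intro t q ht
            exact hdescZ0 q (aux_run_anc hpc t w q hp0 ht)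
          set W' := p.reverse ++ W.drop (k+2) with hW'
          have hLlen : p.reverse.length = np := by simp [hnp]
          have hgetL : ∀ m, m < np → W'[m]? = p[np-1-m]? := by
            intro m hm
            rw [hW', aux_app_get_lt (by rw [hLlen]; omega), aux_rev_get (by omega)]
          have hgetR : ∀ m, np ≤ m → W'[m]? = W[(k+2) + (m - np)]? := by
            intro m hm
            rw [hW', aux_app_get_ge (by rw [hLlen]; omega), aux_drop_get, hLlen]
          have hW'len : W'.length = np + (W.length - (k+2)) := by
            rw [hW']; simp [hnp]
          -- correspondence of triples with i ≥ np - 1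
          have htriple : ∀ i (u' w' v' : V), np - 1 ≤ i →
              W'[i]? = some u' → W'[i+1]? = some w' → W'[i+2]? = some v' →
              W[(k+1) + (i - (np-1))]? = some u' ∧ W[(k+1) + (i - (np-1)) + 1]? = some w' ∧
              W[(k+1) + (i - (np-1)) + 2]? = some v' := by
            intro i u' w' v' hi hu' hw' hv'
            refine ⟨?_, ?_, ?_⟩
            · rcases Nat.eq_or_lt_of_le hi with h1 | h1
              · rw [hgetL i (by omega)] at hu'
                have e : np - 1 - i = 0 := by omega
                rw [e] at hu'
                have : u' = w := Option.some_injective _ (hu'.symm.trans hp0)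
                have e2 : k + 1 + (i - (np-1)) = k + 1 := by omega
                rw [e2, this]; exact hw
              · rw [hgetR i (by omega)] at hu'
                have e : k + 2 + (i - np) = k + 1 + (i - (np-1)) := by omega
                rw [e] at hu'; exact hu'
            · rw [hgetR (i+1) (by omega)] at hw'
              have e : k + 2 + (i + 1 - np) = k + 1 + (i - (np-1)) + 1 := by omega
              rw [e] at hw'; exact hw'
            · rw [hgetR (i+2) (by omega)] at hv'
              have e : k + 2 + (i + 2 - np) = k + 1 + (i - (np-1)) + 2 := by omega
              rw [e] at hv'; exact hv'
          -- left-part triples are non-colliders with vertices on p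
          have hleft : ∀ i (u' w' v' : V), i + 1 ≤ np - 1 →
              W'[i]? = some u' → W'[i+1]? = some w' → W'[i+2]? = some v' →
              ¬ Heads G u' w' v' ∧ w' ∉ Z0 := by
            intro i u' w' v' hi hu' hw' hv'
            rw [hgetL i (by omega)] at hu'
            rw [hgetL (i+1) (by omega)] at hw'
            have hs : np - 1 - (i+1) + 1 = np - 1 - i := by omega
            have hd : G.dir w' u' := by
              have := hpd (np - 1 - (i+1)) w' u' hw' (by rw [hs]; exact hu')
              exact this
            exact ⟨fun hh => aux_dir_not_arrow_rev hd hh.1, hpmemZ _ w' hw'⟩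
          refine ihb {m | BadAt G Z0 W' m}.ncard ?_ W' rfl ⟨?_, ?_, ?_, ?_⟩ ?_
          · -- measure decrease
            refine hcard W' (fun m => (k+1) + (m - (np-1))) ?_ ?_
            · intro m hm
              obtain ⟨u', w', v', hu', hw', hv', hH', hnd'⟩ := hm
              have hmge : np - 1 ≤ m := by
                by_contra hlt
                exact (hleft m u' w' v' (by omega) hu' hw' hv').1 hH'
              obtain ⟨h1, h2, h3⟩ := htriple m u' w' v' hmge hu' hw' hv'
              refine ⟨⟨u', w', v', h1, h2, h3, hH', hnd'⟩, ?_⟩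
              show k < k + 1 + (m - (np-1))
              omega
            · intro m1 m2 hm1 hm2 he
              have hmge1 : np - 1 ≤ m1 := by
                by_contra hlt
                obtain ⟨u', w', v', hu', hw', hv', hH', _⟩ := hm1
                exact (hleft m1 u' w' v' (by omega) hu' hw' hv').1 hH'
              have hmge2 : np - 1 ≤ m2 := by
                by_contra hlt
                obtain ⟨u', w', v', hu', hw', hv', hH', _⟩ := hm2
                exact (hleft m2 u' w' v' (by omega) hu' hw' hv').1 hH'
              have he' : k + 1 + (m1 - (np-1)) = k + 1 + (m2 - (np-1)) := he
              omega
          · -- PAdj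
            intro m u' v' hu' hv'
            rcases Nat.lt_or_ge (m+1) np with hm | hm
            · rw [hgetL m (by omega)] at hu'
              rw [hgetL (m+1) (by omega)] at hv'
              have hs : np - 1 - (m+1) + 1 = np - 1 - m := by omega
              exact aux_adj_symm (aux_adj_of_dir (hpd (np-1-(m+1)) v' u' hv' (by rw [hs]; exact hu')))
            rcases Nat.eq_or_lt_of_le hm with h1 | h1
            · -- m + 1 = np : junction edge between w and W[k+2]
              rw [hgetL m (by omega)] at hu'
              have e : np - 1 - m = 0 := by omega
              rw [e] at hu'
              have : u' = w := Option.some_injective _ (hu'.symm.trans hp0)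
              rw [hgetR (m+1) (by omega)] at hv'
              have e2 : k + 2 + (m + 1 - np) = k + 2 := by omega
              rw [e2] at hv'
              rw [this]
              exact hwk.1 (k+1) w v' hw hv'
            · rw [hgetR m (by omega)] at hu'
              rw [hgetR (m+1) (by omega)] at hv'
              have e : k + 2 + (m + 1 - np) = k + 2 + (m - np) + 1 := by omega
              rw [e] at hv'
              exact hwk.1 (k + 2 + (m - np)) u' v' hu' hv'
          · -- head
            rw [hgetL 0 (by omega)]
            have e : np - 1 - 0 = np - 1 := by omega
            rw [e]; exact hpL
          · -- last
            rw [hW'len, hgetR (np + (W.length - (k+2)) - 1) (by omega)]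
            have e : k + 2 + (np + (W.length - (k+2)) - 1 - np) = W.length - 1 := by omega
            rw [e]; exact hwk.2.2.1
          · -- length
            omega
          · -- PGen
            intro i u' w' v' hu' hw' hv'
            rcases Nat.lt_or_ge (i+1) (np - 1 + 1) with hi | hi
            · obtain ⟨hnh, hnz⟩ := hleft i u' w' v' (by omega) hu' hw' hv'
              exact ⟨fun hh => absurd hh hnh, fun _ => hnz⟩
            · obtain ⟨h1, h2, h3⟩ := htriple i u' w' v' (by omega) hu' hw' hv'
              exact hgen _ u' w' v' h1 h2 h3
        · -- w ancestor of y: replace suffix by directed path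
          rcases hAny with heq | ⟨p, hp⟩
          · exact absurd heq hwy
          obtain ⟨hpc, hpN, hph, hpl, hplen⟩ := hp
          have hpd := aux_chain'_pos.mp hpc
          set np := p.length with hnp
          have hp0 : p[0]? = some w := aux_head?_pos.mp hph
          have hpL : p[np-1]? = some y := aux_getLast?_pos.mp hpl
          have hpmemZ : ∀ (t : ℕ) (q : V), p[t]? = some q → q ∉ Z0 := by
            intro t q ht
            exact hdescZ0 q (aux_run_anc hpc t w q hp0 ht)
          obtain ⟨p', hp'⟩ := aux_head?_cases hph
          have hp'len : p'.length = np - 1 := by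
            rw [hnp, hp']; simp
          set W' := W.take (k+2) ++ p' with hW'
          have hTlen : (W.take (k+2)).length = k+2 := by simp; omega
          have hgetL : ∀ m, m ≤ k+1 → W'[m]? = W[m]? := by
            intro m hm
            rw [hW', aux_app_get_lt (by omega), aux_take_get (by omega)]
          have hgetR : ∀ m, k+2 ≤ m → W'[m]? = p[m - (k+1)]? := by
            intro m hm
            rw [hW', aux_app_get_ge (by omega), hTlen]
            have e : m - (k+1) = (m - (k+2)) + 1 := by omega
            rw [e, hp', aux_cons_get_succ]
          have hW'len : W'.length = k + 2 + (np - 1) := by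
            rw [hW']; simp; omega
          -- positions from k+1 on follow p
          have hptr : ∀ m, k+1 ≤ m → W'[m]? = p[m - (k+1)]? := by
            intro m hm
            rcases Nat.eq_or_lt_of_le hm with h1 | h1
            · rw [hgetL m (by omega)]
              have e : m - (k+1) = 0 := by omega
              rw [e, hp0, ← h1]
              exact hw
            · exact hgetR m (by omega)
          have hleft : ∀ i (u' w' v' : V), k + 1 ≤ i + 1 →
              W'[i]? = some u' → W'[i+1]? = some w' → W'[i+2]? = some v' →
              ¬ Heads G u' w' v' ∧ w' ∉ Z0 := by
            intro i u' w' v' hi hu' hw' hv'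
            rw [hptr (i+1) (by omega)] at hw'
            rw [hptr (i+2) (by omega)] at hv'
            have e : i + 1 - (k+1) + 1 = i + 2 - (k+1) := by omega
            have hd : G.dir w' v' := hpd (i+1-(k+1)) w' v' hw' (by rw [e]; exact hv')
            exact ⟨fun hh => aux_dir_not_arrow_rev hd hh.2, hpmemZ _ w' hw'⟩
          refine ihb {m | BadAt G Z0 W' m}.ncard ?_ W' rfl ⟨?_, ?_, ?_, ?_⟩ ?_
          · -- measure: no bad positions at all
            refine hcard W' (fun m => m) ?_ (fun m1 m2 _ _ he => he)
            intro m hm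
            exfalso
            obtain ⟨u', w', v', hu', hw', hv', hH', hnd'⟩ := hm
            rcases Nat.lt_or_ge (m+1) (k+1) with hmk | hmk
            · refine hmin m (by omega) ⟨u', w', v', ?_, ?_, ?_, hH', hnd'⟩
              · rw [← hgetL m (by omega)]; exact hu'
              · rw [← hgetL (m+1) (by omega)]; exact hw'
              · rw [← hgetL (m+2) (by omega)]; exact hv'
            · exact (hleft m u' w' v' (by omega) hu' hw' hv').1 hH'
          · -- PAdj
            intro m u' v' hu' hv'
            rcases Nat.lt_or_ge (m+1) (k+1) with hm | hm
            · rw [hgetL m (by omega)] at hu'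
              rw [hgetL (m+1) (by omega)] at hv'
              exact hwk.1 m u' v' hu' hv'
            · rw [hptr (m+1) (by omega)] at hv'
              rcases Nat.eq_or_lt_of_le hm with h1 | h1
              · rw [hgetL m (by omega)] at hu'
                have hmk : m = k := by omega
                have e3 : m + 1 - (k+1) = 0 := by omega
                rw [e3, hp0] at hv'
                have hv'w : v' = w := Option.some_injective _ hv'.symm
                rw [hmk] at hu'
                rw [hv'w]
                exact hwk.1 k u' w hu' hw
              · rw [hptr m (by omega)] at hu'
                have e : m + 1 - (k+1) = m - (k+1) + 1 := by omega
                rw [e] at hv'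
                exact aux_adj_of_dir (hpd (m - (k+1)) u' v' hu' hv')
          · -- head
            rw [hgetL 0 (by omega)]; exact hwk.2.1
          · -- last
            rw [hW'len]
            have hnplen : 2 ≤ np := hplen
            rw [hptr (k + 2 + (np-1) - 1) (by omega)]
            have e : k + 2 + (np - 1) - 1 - (k+1) = np - 1 := by omega
            rw [e]; exact hpL
          · -- length
            have : 2 ≤ np := hplen
            omega
          · -- PGen
            intro i u' w' v' hu' hw' hv'
            rcases Nat.lt_or_ge (i+1) (k+1) with hi | hi
            · rw [hgetL i (by omega)] at hu'
              rw [hgetL (i+1) (by omega)] at hw'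
              rw [hgetL (i+2) (by omega)] at hv'
              exact hgen i u' w' v' hu' hw' hv'
            · obtain ⟨hnh, hnz⟩ := hleft i u' w' v' (by omega) hu' hw' hv'
              exact ⟨fun hh => absurd hh hnh, fun _ => hnz⟩

end Aux10
section Aux11

open List

variable {G : MixedGraph V}

/-- Main lemma: if some `Z0` avoiding `x, y` m-separates them, then the
D-SEP-style set `DSet G x y` also m-separates them. -/
lemma aux_main {x y : V} {Z0 : Set V} (hxy : x ≠ y) (hx0 : x ∉ Z0) (hy0 : y ∉ Z0)
    (hsep : MSep G Z0 x y) : MSep G (DSet G x y) x y := by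
  intro p hp
  have hmcw := aux_conv1 hp
  obtain ⟨W', hWind⟩ := aux_ind p.length p rfl hmcw
  obtain ⟨hWwalk, hWtrip⟩ := hWind
  have hgen : PGen G x y Z0 W' := by
    intro i u w v hu hw hv
    obtain ⟨hH, hAn⟩ := hWtrip i u w v hu hw hv
    exact ⟨fun _ => Or.inr hAn, fun hnh => absurd hH hnh⟩
  obtain ⟨q, hq⟩ := aux_s2 hx0 hy0 hxy {m | BadAt G Z0 W' m}.ncard W' rfl hWwalk hgen
  exact hsep q hq

end Aux11
/-- Lemma 1 (Xie et al. 2024): for `x ∈ MB(y)`, `x` and `y` are m-separated by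
some subset of `V \ {x, y}` iff they are m-separated by some subset of
`MB(y) \ {x}`. -/
theorem msep_iff_msep_within_markov_blanket
    {V : Type*} [Fintype V] (G : MixedGraph V) (hG : IsMAG G)
    (x y : V) (hx : x ∈ MarkovBlanket G y) :
    (∃ Z ⊆ ((Set.univ : Set V) \ {x, y}), MSep G Z x y) ↔
      (∃ Z ⊆ MarkovBlanket G y \ {x}, MSep G Z x y) := by
  have hxy : x ≠ y := hx.1
  constructor
  · rintro ⟨Z0, hsub, hsep⟩
    have hx0 : x ∉ Z0 := fun h => by
      have := hsub h
      simp at this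
    have hy0 : y ∉ Z0 := fun h => by
      have := hsub h
      simp at this
    exact ⟨DSet G x y, aux_D_sub_MB, aux_main hxy hx0 hy0 hsep⟩
  · rintro ⟨Z, hsub, hsep⟩
    refine ⟨Z, ?_, hsep⟩
    intro v hv
    obtain ⟨hmb, hvx⟩ := hsub hv
    refine ⟨Set.mem_univ v, ?_⟩
    simp only [Set.mem_insert_iff, Set.mem_singleton_iff]
    push_neg
    exact ⟨fun h => hvx (by simp [h]), hmb.1⟩

end CausalGraph
end
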